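/- If A is an irreducible Metzler matrix with regular splitting A = T + U (T ⪰ 0, U Metzler and Hurwitz), then the leading eigenvalue of A is positive (respectively zero) if and only if the spectral radius ρ(−T U⁻¹) is greater than 1 (respectively equal to 1). -/

import Mathlib

set_option maxHeartbeats 1000000

open Matrix Filter Topology
open scoped ENNReal NNReal

namespace RST

attribute [local instance] Matrix.linftyOpNormedAddCommGroup Matrix.linftyOpNormedRing
  Matrix.linftyOpNormedAlgebra

variable {N : ℕ}

/-- complex lift of a real matrix -/
noncomputable def Cm (M : Matrix (Fin N) (Fin N) ℝ) : Matrix (Fin N) (Fin N) ℂ :=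
  M.map (Complex.ofReal : ℝ → ℂ)

noncomputable instance : CompleteSpace (Matrix (Fin N) (Fin N) ℂ) :=
  FiniteDimensional.complete ℂ _

lemma Cm_add (M M' : Matrix (Fin N) (Fin N) ℝ) : Cm (M + M') = Cm M + Cm M' := by
  ext i j; simp [Cm]

lemma Cm_mul (M M' : Matrix (Fin N) (Fin N) ℝ) : Cm (M * M') = Cm M * Cm M' := by
  ext i j; simp [Cm, Matrix.mul_apply]

lemma Cm_one : Cm (1 : Matrix (Fin N) (Fin N) ℝ) = 1 := by
  ext i j; by_cases h : i = j <;> simp [Cm, Matrix.one_apply, h]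

lemma Cm_pow (M : Matrix (Fin N) (Fin N) ℝ) (n : ℕ) : Cm (M ^ n) = Cm M ^ n := by
  induction n with
  | zero => simpa using Cm_one
  | succ n ih => rw [pow_succ, pow_succ, Cm_mul, ih]

lemma Cm_smul (t : ℝ) (M : Matrix (Fin N) (Fin N) ℝ) :
    Cm (t • M) = (t : ℂ) • Cm M := by
  ext i j; simp [Cm]

lemma Cm_sub (M M' : Matrix (Fin N) (Fin N) ℝ) : Cm (M - M') = Cm M - Cm M' := by
  ext i j; simp [Cm]

lemma Cm_det (M : Matrix (Fin N) (Fin N) ℝ) :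
    (Cm M).det = ((M.det : ℝ) : ℂ) := by
  exact (RingHom.map_det (Complex.ofRealHom) M).symm

/-- membership in the spectrum via the determinant -/
lemma mem_spec_iff_det (X : Matrix (Fin N) (Fin N) ℂ) (z : ℂ) :
    z ∈ spectrum ℂ X ↔ (z • (1 : Matrix (Fin N) (Fin N) ℂ) - X).det = 0 := by
  rw [spectrum.mem_iff, Algebra.algebraMap_eq_smul_one]
  constructor
  · intro h
    by_contra hd
    exact h ((Matrix.isUnit_iff_isUnit_det _).2 (isUnit_iff_ne_zero.2 hd))
  · intro hd h
    exact absurd ((Matrix.isUnit_iff_isUnit_det _).1 h) (by simp [hd])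

/-- real version -/
lemma mem_spec_iff_det_real (M : Matrix (Fin N) (Fin N) ℝ) (t : ℝ) :
    ((t : ℂ) ∈ spectrum ℂ (Cm M)) ↔ (t • (1 : Matrix (Fin N) (Fin N) ℝ) - M).det = 0 := by
  rw [mem_spec_iff_det]
  have : (t : ℂ) • (1 : Matrix (Fin N) (Fin N) ℂ) - Cm M = Cm (t • 1 - M) := by
    rw [Cm_sub, Cm_smul, Cm_one]
  rw [this, Cm_det]
  exact_mod_cast Complex.ofReal_eq_zero

/-- eigenvector from spectrum membership -/
lemma exists_eigenvector {X : Matrix (Fin N) (Fin N) ℂ} {z : ℂ}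
    (hz : z ∈ spectrum ℂ X) : ∃ v : Fin N → ℂ, v ≠ 0 ∧ X.mulVec v = z • v := by
  rw [mem_spec_iff_det] at hz
  obtain ⟨v, hv0, hv⟩ := (Matrix.exists_mulVec_eq_zero_iff).2 hz
  refine ⟨v, hv0, ?_⟩
  have := hv
  rw [Matrix.sub_mulVec, sub_eq_zero] at this
  rw [← this, Matrix.smul_mulVec, Matrix.one_mulVec]

/-- spectrum membership from eigenvector -/
lemma mem_spectrum_of_eigenvector {X : Matrix (Fin N) (Fin N) ℂ} {z : ℂ}
    {v : Fin N → ℂ} (hv0 : v ≠ 0) (hv : X.mulVec v = z • v) : z ∈ spectrum ℂ X := by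
  rw [mem_spec_iff_det]
  apply (Matrix.exists_mulVec_eq_zero_iff).1
  refine ⟨v, hv0, ?_⟩
  rw [Matrix.sub_mulVec, Matrix.smul_mulVec, Matrix.one_mulVec, hv, sub_self]


section specbasics
variable [NeZero N] (M : Matrix (Fin N) (Fin N) ℝ)

lemma spec_nonempty : (spectrum ℂ (Cm M)).Nonempty := spectrum.nonempty _

lemma spec_finite : (spectrum ℂ (Cm M)).Finite := Matrix.finite_spectrum _

noncomputable def sRad (M : Matrix (Fin N) (Fin N) ℝ) : ℝ :=
  sSup ((fun z : ℂ => ‖z‖) '' spectrum ℂ (Cm M))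

noncomputable def sRe (M : Matrix (Fin N) (Fin N) ℝ) : ℝ :=
  sSup (Complex.re '' spectrum ℂ (Cm M))

lemma sRad_mem : ∃ z ∈ spectrum ℂ (Cm M), ‖z‖ = sRad M := by
  have h := ((spec_nonempty M).image (fun z : ℂ => ‖z‖)).csSup_mem
    ((spec_finite M).image _)
  obtain ⟨z, hz, hz2⟩ := h
  exact ⟨z, hz, hz2⟩

lemma le_sRad {z : ℂ} (hz : z ∈ spectrum ℂ (Cm M)) : ‖z‖ ≤ sRad M :=
  le_csSup ((spec_finite M).image _).bddAbove ⟨z, hz, rfl⟩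

lemma sRad_nonneg : 0 ≤ sRad M := by
  obtain ⟨z, _, hz⟩ := sRad_mem M
  rw [← hz]; exact norm_nonneg z

lemma sRe_mem : ∃ z ∈ spectrum ℂ (Cm M), z.re = sRe M := by
  have h := ((spec_nonempty M).image Complex.re).csSup_mem ((spec_finite M).image _)
  obtain ⟨z, hz, hz2⟩ := h
  exact ⟨z, hz, hz2⟩

lemma le_sRe {z : ℂ} (hz : z ∈ spectrum ℂ (Cm M)) : z.re ≤ sRe M :=
  le_csSup ((spec_finite M).image _).bddAbove ⟨z, hz, rfl⟩

lemma spectralRadius_eq : spectralRadius ℂ (Cm M) = ENNReal.ofReal (sRad M) := by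
  apply le_antisymm
  · rw [spectralRadius]
    apply iSup₂_le
    intro z hz
    have h1 : ‖z‖ ≤ sRad M := by
      simpa using le_sRad M hz
    rw [← ENNReal.ofReal_coe_nnreal, coe_nnnorm]
    exact ENNReal.ofReal_le_ofReal h1
  · obtain ⟨z, hz, habs⟩ := sRad_mem M
    have heq : ENNReal.ofReal (sRad M) = ((‖z‖₊ : ℝ≥0) : ℝ≥0∞) := by
      rw [← ENNReal.ofReal_coe_nnreal, coe_nnnorm, habs]
    rw [heq, spectralRadius]
    exact le_iSup₂ (f := fun k (_ : k ∈ spectrum ℂ (Cm M)) => (‖k‖₊ : ℝ≥0∞)) z hz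

/-- Gelfand's formula, real form -/
lemma tendsto_gelfand :
    Tendsto (fun n : ℕ => ‖Cm M ^ n‖ ^ (1 / (n : ℝ))) atTop (𝓝 (sRad M)) := by
  have h := spectrum.pow_norm_pow_one_div_tendsto_nhds_spectralRadius (Cm M)
  rw [spectralRadius_eq] at h
  have h2 := (ENNReal.tendsto_toReal (ENNReal.ofReal_ne_top)).comp h
  simp only [Function.comp_def] at h2
  rw [ENNReal.toReal_ofReal (sRad_nonneg M)] at h2
  refine h2.congr fun n => ?_
  rw [ENNReal.toReal_ofReal (Real.rpow_nonneg (norm_nonneg _) _)]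

end specbasics

section normbasics
variable (X : Matrix (Fin N) (Fin N) ℂ)

lemma entry_le_norm (i j : Fin N) : ‖X i j‖ ≤ ‖X‖ := by
  have h1 : ‖X i j‖₊ ≤ ∑ j', ‖X i j'‖₊ :=
    Finset.single_le_sum (f := fun j' => ‖X i j'‖₊) (fun _ _ => zero_le) (Finset.mem_univ j)
  have h2 : (∑ j', ‖X i j'‖₊) ≤ ‖X‖₊ := by
    rw [Matrix.linfty_opNNNorm_def]
    exact Finset.le_sup (f := fun i => ∑ j, ‖X i j‖₊) (Finset.mem_univ i)
  exact_mod_cast h1.trans h2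

lemma norm_le_sum : ‖X‖ ≤ ∑ i, ∑ j, ‖X i j‖ := by
  have : ‖X‖₊ ≤ ∑ i, ∑ j, ‖X i j‖₊ := by
    rw [Matrix.linfty_opNNNorm_def]
    refine Finset.sup_le fun i _ => ?_
    exact Finset.single_le_sum (f := fun i => ∑ j, ‖X i j‖₊) (fun _ _ => zero_le)
      (Finset.mem_univ i)
  have h' := NNReal.coe_le_coe.2 this
  push_cast at h'
  simpa using h'

end normbasics

/-- monotonicity of the norm for entrywise-dominated real matrices -/
lemma norm_Cm_mono {M M' : Matrix (Fin N) (Fin N) ℝ}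
    (h0 : ∀ i j, 0 ≤ M i j) (h : ∀ i j, M i j ≤ M' i j) : ‖Cm M‖ ≤ ‖Cm M'‖ := by
  have : ‖Cm M‖₊ ≤ ‖Cm M'‖₊ := by
    rw [Matrix.linfty_opNNNorm_def, Matrix.linfty_opNNNorm_def]
    refine Finset.sup_mono_fun fun i _ => ?_
    refine Finset.sum_le_sum fun j _ => ?_
    have : ‖(Cm M) i j‖ ≤ ‖(Cm M') i j‖ := by
      simp only [Cm, Matrix.map_apply, Complex.norm_real]
      rw [Real.norm_eq_abs, Real.norm_eq_abs, abs_of_nonneg (h0 i j),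
        abs_of_nonneg ((h0 i j).trans (h i j))]
      exact h i j
    exact_mod_cast this
  exact_mod_cast this

lemma norm_Cm_entry {M : Matrix (Fin N) (Fin N) ℝ} (h0 : ∀ i j, 0 ≤ M i j) (i j : Fin N) :
    M i j ≤ ‖Cm M‖ := by
  have := entry_le_norm (Cm M) i j
  simpa [Cm, Complex.norm_real, Real.norm_eq_abs, abs_of_nonneg (h0 i j)] using this



section entrywise
variable {X Y X' Y' : Matrix (Fin N) (Fin N) ℝ}

lemma mul_entry_nonneg (hX : ∀ i j, 0 ≤ X i j) (hY : ∀ i j, 0 ≤ Y i j) :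
    ∀ i j, 0 ≤ (X * Y) i j := fun i j => by
  rw [Matrix.mul_apply]
  exact Finset.sum_nonneg fun k _ => mul_nonneg (hX i k) (hY k j)

lemma mul_entry_mono (hX : ∀ i j, 0 ≤ X i j) (hY : ∀ i j, 0 ≤ Y i j)
    (hXX : ∀ i j, X i j ≤ X' i j) (hYY : ∀ i j, Y i j ≤ Y' i j) :
    ∀ i j, (X * Y) i j ≤ (X' * Y') i j := fun i j => by
  rw [Matrix.mul_apply, Matrix.mul_apply]
  exact Finset.sum_le_sum fun k _ =>
    mul_le_mul (hXX i k) (hYY k j) (hY k j) ((hX i k).trans (hXX i k))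

lemma pow_entry_nonneg (hX : ∀ i j, 0 ≤ X i j) (n : ℕ) : ∀ i j, 0 ≤ (X ^ n) i j := by
  induction n with
  | zero => intro i j; by_cases h : i = j <;> simp [Matrix.one_apply, h, pow_zero]
  | succ n ih => rw [pow_succ]; exact mul_entry_nonneg ih hX

lemma pow_entry_mono (hX : ∀ i j, 0 ≤ X i j) (hXX : ∀ i j, X i j ≤ Y i j) (n : ℕ) :
    ∀ i j, (X ^ n) i j ≤ (Y ^ n) i j := by
  induction n with
  | zero => intro i j; simp [pow_zero]
  | succ n ih =>
      rw [pow_succ, pow_succ]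
      exact mul_entry_mono (pow_entry_nonneg hX n) hX ih hXX

lemma mulVec_entry_nonneg (hX : ∀ i j, 0 ≤ X i j) {v : Fin N → ℝ} (hv : ∀ i, 0 ≤ v i) :
    ∀ i, 0 ≤ (X.mulVec v) i := fun i => by
  simp only [Matrix.mulVec, dotProduct]
  exact Finset.sum_nonneg fun k _ => mul_nonneg (hX i k) (hv k)

lemma mulVec_mono (hX : ∀ i j, 0 ≤ X i j) {v w : Fin N → ℝ} (hvw : ∀ i, v i ≤ w i) :
    ∀ i, (X.mulVec v) i ≤ (X.mulVec w) i := fun i => by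
  simp only [Matrix.mulVec, dotProduct]
  exact Finset.sum_le_sum fun k _ => mul_le_mul_of_nonneg_left (hvw k) (hX i k)

end entrywise

/-- row sums of a nonnegative real matrix are bounded by the norm of its lift -/
lemma row_sum_le_norm {M : Matrix (Fin N) (Fin N) ℝ} (h0 : ∀ i j, 0 ≤ M i j) (i : Fin N) :
    ∑ j, M i j ≤ ‖Cm M‖ := by
  have h1 : (∑ j, ‖Cm M i j‖₊) ≤ ‖Cm M‖₊ := by
    rw [Matrix.linfty_opNNNorm_def]
    exact Finset.le_sup (f := fun i => ∑ j, ‖Cm M i j‖₊) (Finset.mem_univ i)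
  have h2 : ((∑ j, ‖Cm M i j‖₊ : ℝ≥0) : ℝ) = ∑ j, M i j := by
    push_cast
    refine Finset.sum_congr rfl fun j _ => ?_
    simp [Cm, Complex.norm_real, Real.norm_eq_abs, abs_of_nonneg (h0 i j)]
  calc ∑ j, M i j = ((∑ j, ‖Cm M i j‖₊ : ℝ≥0) : ℝ) := h2.symm
    _ ≤ ‖Cm M‖ := by exact_mod_cast h1

section gelfandcons
variable [NeZero N] (M : Matrix (Fin N) (Fin N) ℝ)

/-- ρ(M)^n ≤ ‖(Cm M)^n‖ -/
lemma sRad_pow_le (n : ℕ) : sRad M ^ n ≤ ‖Cm M ^ n‖ := by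
  obtain ⟨z, hz, habs⟩ := sRad_mem M
  obtain ⟨v, hv0, hv⟩ := exists_eigenvector hz
  have hvn : ∀ m : ℕ, (Cm M ^ m).mulVec v = z ^ m • v := by
    intro m
    induction m with
    | zero => simp
    | succ m ih =>
        rw [pow_succ, pow_succ, ← Matrix.mulVec_mulVec, hv, Matrix.mulVec_smul, ih, smul_smul,
          mul_comm]
  have hmem : z ^ n ∈ spectrum ℂ (Cm M ^ n) := mem_spectrum_of_eigenvector hv0 (hvn n)
  have hb := spectrum.norm_le_norm_of_mem hmem
  calc sRad M ^ n = ‖z ^ n‖ := by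
        rw [norm_pow, habs]
    _ ≤ ‖Cm M ^ n‖ := hb

/-- if `ρ^n ≤ C r^n` for all `n` then `ρ ≤ r` (for `r > 0`) -/
lemma le_of_pow_le {r C ρ : ℝ} (hρ : 0 ≤ ρ) (hr : 0 < r)
    (h : ∀ n : ℕ, ρ ^ n ≤ C * r ^ n) : ρ ≤ r := by
  by_contra hlt
  push_neg at hlt
  have h1 : (1 : ℝ) < ρ / r := (one_lt_div hr).2 hlt
  have h2 : Tendsto (fun n : ℕ => (ρ / r) ^ n) atTop atTop :=
    tendsto_pow_atTop_atTop_of_one_lt h1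
  obtain ⟨n, hn⟩ := (h2.eventually_gt_atTop C).exists
  have h3 : (ρ / r) ^ n ≤ C := by
    rw [div_pow, div_le_iff₀ (pow_pos hr n)]
    exact h n
  linarith

/-- upper bound for the spectral radius from norm bounds on powers -/
lemma sRad_le_of_norm_pow_le {C r : ℝ} (hr : 0 < r)
    (h : ∀ n : ℕ, ‖Cm M ^ n‖ ≤ C * r ^ n) : sRad M ≤ r :=
  le_of_pow_le (sRad_nonneg M) hr fun n => (sRad_pow_le M n).trans (h n)

/-- lower bound for the spectral radius from norm bounds on powers (Gelfand) -/
lemma le_sRad_of_norm_pow_ge {a t : ℝ} (ha : 0 < a) (ht : 0 ≤ t)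
    (h : ∀ n : ℕ, 1 ≤ n → a * t ^ n ≤ ‖Cm M ^ n‖) : t ≤ sRad M := by
  have hg := tendsto_gelfand M
  have hlim : Tendsto (fun n : ℕ => a ^ (1 / (n : ℝ)) * t) atTop (𝓝 t) := by
    have h1 : Tendsto (fun n : ℕ => (1 / (n : ℝ))) atTop (𝓝 0) :=
      tendsto_one_div_atTop_nhds_zero_nat
    have h2 : Tendsto (fun n : ℕ => a ^ (1 / (n : ℝ))) atTop (𝓝 1) := by
      have hc : ContinuousAt (fun x : ℝ => a ^ x) 0 :=
        Real.continuousAt_const_rpow (ne_of_gt ha)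
      have h3 := hc.tendsto.comp h1
      simpa [Function.comp_def] using h3
    simpa using h2.mul_const t
  refine le_of_tendsto_of_tendsto hlim hg ?_
  filter_upwards [eventually_ge_atTop 1] with n h0
  · have hnne : (n:ℝ) ≠ 0 := Nat.cast_ne_zero.2 (Nat.one_le_iff_ne_zero.1 h0)
    have hb := h n h0
    have hb' : 0 ≤ a * t ^ n := by positivity
    have hmain := Real.rpow_le_rpow hb' hb (by positivity : (0:ℝ) ≤ 1 / (n:ℝ))
    calc a ^ (1 / (n:ℝ)) * t = (a * t ^ n) ^ (1 / (n:ℝ)) := by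
          rw [Real.mul_rpow (le_of_lt ha) (by positivity), ← Real.rpow_natCast t n,
            ← Real.rpow_mul ht]
          field_simp
          simp
      _ ≤ ‖Cm M ^ n‖ ^ (1 / (n:ℝ)) := hmain

/-- monotonicity of the spectral radius for entrywise ordered nonnegative matrices -/
lemma sRad_mono {X Y : Matrix (Fin N) (Fin N) ℝ} (hX : ∀ i j, 0 ≤ X i j)
    (hXY : ∀ i j, X i j ≤ Y i j) : sRad X ≤ sRad Y := by
  have key : ∀ n : ℕ, sRad X ^ n ≤ ‖Cm Y ^ n‖ := by
    intro n
    calc sRad X ^ n ≤ ‖Cm X ^ n‖ := sRad_pow_le X n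
      _ = ‖Cm (X ^ n)‖ := by rw [Cm_pow]
      _ ≤ ‖Cm (Y ^ n)‖ := norm_Cm_mono (pow_entry_nonneg hX n) (pow_entry_mono hX hXY n)
      _ = ‖Cm Y ^ n‖ := by rw [Cm_pow]
  have hg := tendsto_gelfand Y
  refine le_of_tendsto_of_tendsto tendsto_const_nhds hg ?_
  filter_upwards [eventually_ge_atTop 1] with n h0
  · have hnne : (n:ℝ) ≠ 0 := Nat.cast_ne_zero.2 (Nat.one_le_iff_ne_zero.1 h0)
    have h1 : sRad X = (sRad X ^ n) ^ (1/(n:ℝ)) := by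
      rw [← Real.rpow_natCast (sRad X) n, ← Real.rpow_mul (sRad_nonneg X)]
      field_simp
      simp
    rw [h1]
    exact Real.rpow_le_rpow (pow_nonneg (sRad_nonneg X) n) (key n) (by positivity)

/-- Collatz–Wielandt type lower bound -/
lemma cw_lower {P : Matrix (Fin N) (Fin N) ℝ} (hP : ∀ i j, 0 ≤ P i j)
    {y : Fin N → ℝ} (hy : ∀ i, 0 ≤ y i) (hy0 : y ≠ 0) {t : ℝ}
    (h : ∀ i, t * y i ≤ (P.mulVec y) i) : t ≤ sRad P := by
  rcases le_or_gt t 0 with ht | ht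
  · exact ht.trans (sRad_nonneg P)
  obtain ⟨i₀, hi₀⟩ : ∃ i, 0 < y i := by
    by_contra hc
    push_neg at hc
    exact hy0 (funext fun i => le_antisymm (hc i) (hy i))
  have key : ∀ n : ℕ, ∀ i, t ^ n * y i ≤ ((P ^ n).mulVec y) i := by
    intro n
    induction n with
    | zero => intro i; simp
    | succ n ih =>
        intro i
        have h1 : (P.mulVec (fun j => t ^ n * y j)) i ≤ (P.mulVec ((P ^ n).mulVec y)) i :=
          mulVec_mono hP ih i
        have h2 : (P.mulVec (fun j => t ^ n * y j)) i = t ^ n * (P.mulVec y) i := by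
          simp only [Matrix.mulVec, dotProduct, Finset.mul_sum]
          exact Finset.sum_congr rfl fun k _ => by ring
        have h3 : t ^ n * (t * y i) ≤ t ^ n * (P.mulVec y) i :=
          mul_le_mul_of_nonneg_left (h i) (by positivity)
        have h4 : (P.mulVec ((P ^ n).mulVec y)) i = ((P ^ (n+1)).mulVec y) i := by
          rw [Matrix.mulVec_mulVec, ← pow_succ']
        calc t ^ (n+1) * y i = t ^ n * (t * y i) := by ring
          _ ≤ t ^ n * (P.mulVec y) i := h3
          _ = (P.mulVec (fun j => t ^ n * y j)) i := h2.symm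
          _ ≤ (P.mulVec ((P ^ n).mulVec y)) i := h1
          _ = ((P ^ (n+1)).mulVec y) i := h4
  set ymax := ∑ j, y j with hymax
  have hymaxpos : 0 < ymax :=
    lt_of_lt_of_le hi₀ (Finset.single_le_sum (f := fun j => y j) (fun j _ => hy j)
      (Finset.mem_univ i₀))
  have hnorm : ∀ n : ℕ, 1 ≤ n → (y i₀ / ymax) * t ^ n ≤ ‖Cm P ^ n‖ := by
    intro n _
    have h5 : t ^ n * y i₀ ≤ ((P ^ n).mulVec y) i₀ := key n i₀
    have h6 : ((P ^ n).mulVec y) i₀ ≤ (∑ j, (P ^ n) i₀ j) * ymax := by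
      simp only [Matrix.mulVec, dotProduct]
      rw [Finset.sum_mul]
      refine Finset.sum_le_sum fun j _ => ?_
      have hyj : y j ≤ ymax :=
        Finset.single_le_sum (f := fun j => y j) (fun j _ => hy j) (Finset.mem_univ j)
      exact mul_le_mul_of_nonneg_left hyj (pow_entry_nonneg hP n i₀ j)
    have h7 : ∑ j, (P ^ n) i₀ j ≤ ‖Cm (P ^ n)‖ := row_sum_le_norm (pow_entry_nonneg hP n) i₀
    have h8 : (y i₀ / ymax) * t ^ n ≤ ∑ j, (P ^ n) i₀ j := by
      rw [div_mul_eq_mul_div, div_le_iff₀ hymaxpos]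
      calc y i₀ * t ^ n = t ^ n * y i₀ := by ring
        _ ≤ ((P ^ n).mulVec y) i₀ := h5
        _ ≤ (∑ j, (P ^ n) i₀ j) * ymax := h6
    rw [← Cm_pow]
    exact h8.trans h7
  exact le_sRad_of_norm_pow_ge P (by positivity) (le_of_lt ht) hnorm

/-- bounded powers: if `X ≥ 0` and `X w ≤ w` for strictly positive `w`, then `ρ(X) ≤ 1` -/
lemma sRad_le_one_of_fixed {X : Matrix (Fin N) (Fin N) ℝ} (hX : ∀ i j, 0 ≤ X i j)
    {w : Fin N → ℝ} (hw : ∀ i, 0 < w i) (h : ∀ i, (X.mulVec w) i ≤ w i) : sRad X ≤ 1 := by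
  have key : ∀ n : ℕ, ∀ i, ((X ^ n).mulVec w) i ≤ w i := by
    intro n
    induction n with
    | zero => intro i; simp
    | succ n ih =>
        intro i
        have h1 := mulVec_mono hX ih i
        rw [Matrix.mulVec_mulVec, ← pow_succ'] at h1
        exact h1.trans (h i)
  obtain ⟨imin, _, hminmem⟩ := Finset.exists_min_image Finset.univ w
    ⟨⟨0, Nat.pos_of_ne_zero (NeZero.ne N)⟩, Finset.mem_univ _⟩
  obtain ⟨imax, _, hmaxmem⟩ := Finset.exists_max_image Finset.univ w
    ⟨⟨0, Nat.pos_of_ne_zero (NeZero.ne N)⟩, Finset.mem_univ _⟩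
  set wmin := w imin
  set wmax := w imax
  have hwminpos : 0 < wmin := hw imin
  have hwmaxpos : 0 < wmax := hw imax
  have hwmin : ∀ i, wmin ≤ w i := fun i => hminmem i (Finset.mem_univ i)
  have hwmax : ∀ i, w i ≤ wmax := fun i => hmaxmem i (Finset.mem_univ i)
  have hent : ∀ n : ℕ, ∀ i j, (X ^ n) i j ≤ wmax / wmin := by
    intro n i j
    have h1 : (X ^ n) i j * wmin ≤ ((X ^ n).mulVec w) i := by
      calc (X ^ n) i j * wmin ≤ (X ^ n) i j * w j :=
            mul_le_mul_of_nonneg_left (hwmin j) (pow_entry_nonneg hX n i j)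
        _ ≤ ∑ k, (X ^ n) i k * w k :=
            Finset.single_le_sum (f := fun k => (X ^ n) i k * w k)
              (fun k _ => mul_nonneg (pow_entry_nonneg hX n i k) (le_of_lt (hw k)))
              (Finset.mem_univ j)
        _ = ((X ^ n).mulVec w) i := by simp [Matrix.mulVec, dotProduct]
    rw [le_div_iff₀ hwminpos]
    exact (h1.trans (key n i)).trans (hwmax i)
  have hnorm : ∀ n : ℕ, ‖Cm X ^ n‖ ≤ ((N:ℝ)^2 * (wmax / wmin)) * 1 ^ n := by
    intro n
    rw [← Cm_pow]
    have h1 := norm_le_sum (Cm (X ^ n))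
    have h2 : ∑ i, ∑ j, ‖Cm (X ^ n) i j‖ ≤ ∑ i : Fin N, ∑ j : Fin N, (wmax / wmin) := by
      refine Finset.sum_le_sum fun i _ => Finset.sum_le_sum fun j _ => ?_
      simp only [Cm, Matrix.map_apply, Complex.norm_real, Real.norm_eq_abs]
      rw [abs_of_nonneg (pow_entry_nonneg hX n i j)]
      exact hent n i j
    have h3 : (∑ i : Fin N, ∑ j : Fin N, (wmax / wmin)) = (N:ℝ)^2 * (wmax/wmin) := by
      simp [Finset.sum_const]
      ring
    rw [one_pow, mul_one]
    calc ‖Cm (X ^ n)‖ ≤ ∑ i, ∑ j, ‖Cm (X ^ n) i j‖ := h1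
      _ ≤ ∑ i : Fin N, ∑ j : Fin N, (wmax / wmin) := h2
      _ = (N:ℝ)^2 * (wmax/wmin) := h3
  exact sRad_le_of_norm_pow_le X one_pos hnorm

end gelfandcons

lemma norm_Cm_eq (M : Matrix (Fin N) (Fin N) ℝ) : ‖Cm M‖ = ‖M‖ := by
  have : ‖Cm M‖₊ = ‖M‖₊ := by
    rw [Matrix.linfty_opNNNorm_def, Matrix.linfty_opNNNorm_def]
    refine Finset.sup_congr rfl fun i _ => Finset.sum_congr rfl fun j _ => ?_
    simp [Cm]
  rw [← coe_nnnorm, ← coe_nnnorm, this]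

lemma entry_le_norm_real (M : Matrix (Fin N) (Fin N) ℝ) (i j : Fin N) : ‖M i j‖ ≤ ‖M‖ := by
  have h1 : ‖M i j‖₊ ≤ ∑ j', ‖M i j'‖₊ :=
    Finset.single_le_sum (f := fun j' => ‖M i j'‖₊) (fun _ _ => zero_le) (Finset.mem_univ j)
  have h2 : (∑ j', ‖M i j'‖₊) ≤ ‖M‖₊ := by
    rw [Matrix.linfty_opNNNorm_def]
    exact Finset.le_sup (f := fun i => ∑ j', ‖M i j'‖₊) (Finset.mem_univ i)
  exact_mod_cast h1.trans h2

section resolvent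
variable [NeZero N]

/-- growth bound on powers from the spectral radius (Gelfand) -/
lemma geom_bound (X : Matrix (Fin N) (Fin N) ℝ) {r : ℝ} (hρ : sRad X < r) (hr : 0 < r) :
    ∃ C : ℝ, 0 < C ∧ ∀ n : ℕ, ‖X ^ n‖ ≤ C * r ^ n := by
  have hg := tendsto_gelfand X
  have hev : ∀ᶠ n : ℕ in atTop, ‖Cm X ^ n‖ ^ (1/(n:ℝ)) < r := hg.eventually_lt_const hρ
  obtain ⟨n₀, hn₀⟩ := eventually_atTop.1 hev
  have hbig : ∀ n : ℕ, n₀ ≤ n → 1 ≤ n → ‖X ^ n‖ ≤ r ^ n := by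
    intro n hn hn1
    have h1 := (hn₀ n hn).le
    have hnne : (n:ℝ) ≠ 0 := Nat.cast_ne_zero.2 (Nat.one_le_iff_ne_zero.1 hn1)
    have h2 := Real.rpow_le_rpow (Real.rpow_nonneg (norm_nonneg _) _) h1
      (le_of_lt (Nat.cast_pos.2 hn1 : (0:ℝ) < n))
    rw [← Real.rpow_mul (norm_nonneg _),
      one_div, inv_mul_cancel₀ hnne, Real.rpow_one, Real.rpow_natCast] at h2
    rw [← norm_Cm_eq, Cm_pow]
    exact h2
  have hsum0 : 0 ≤ ∑ n ∈ Finset.range (n₀ + 1), ‖X ^ n‖ / r ^ n :=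
    Finset.sum_nonneg fun n _ => div_nonneg (norm_nonneg _) (le_of_lt (pow_pos hr n))
  refine ⟨1 + ∑ n ∈ Finset.range (n₀ + 1), ‖X ^ n‖ / r ^ n, by linarith, fun n => ?_⟩
  rcases le_or_gt n n₀ with hle | hgt
  · have h1 : ‖X ^ n‖ / r ^ n ≤ ∑ m ∈ Finset.range (n₀ + 1), ‖X ^ m‖ / r ^ m :=
      Finset.single_le_sum (f := fun m => ‖X ^ m‖ / r ^ m)
        (fun m _ => div_nonneg (norm_nonneg _) (le_of_lt (pow_pos hr m)))
        (Finset.mem_range.2 (Nat.lt_succ_of_le hle))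
    calc ‖X ^ n‖ = (‖X ^ n‖ / r ^ n) * r ^ n := by field_simp
      _ ≤ (1 + ∑ m ∈ Finset.range (n₀ + 1), ‖X ^ m‖ / r ^ m) * r ^ n :=
        mul_le_mul_of_nonneg_right (by linarith) (le_of_lt (pow_pos hr n))
  · have := hbig n (le_of_lt hgt) (by omega)
    calc ‖X ^ n‖ ≤ r ^ n := this
      _ = 1 * r ^ n := (one_mul _).symm
      _ ≤ (1 + ∑ m ∈ Finset.range (n₀ + 1), ‖X ^ m‖ / r ^ m) * r ^ n :=
        mul_le_mul_of_nonneg_right (by linarith) (le_of_lt (pow_pos hr n))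

/-- the resolvent of a nonnegative matrix at a point beyond the spectral radius,
as an entrywise-nonnegative convergent geometric series -/
lemma resolvent_facts (X : Matrix (Fin N) (Fin N) ℝ) (hX : ∀ i j, 0 ≤ X i j)
    {t : ℝ} (ht : sRad X < t) :
    ∃ S : Matrix (Fin N) (Fin N) ℝ,
      (t • 1 - X) * S = 1 ∧ S * (t • 1 - X) = 1 ∧
      (∀ i j, Tendsto (fun K => ∑ n ∈ Finset.range K, (X ^ n) i j / t ^ (n+1))
        atTop (𝓝 (S i j))) := by
  have ht0 : 0 < t := lt_of_le_of_lt (sRad_nonneg X) ht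
  obtain ⟨r, hr1, hr2⟩ : ∃ r, sRad X < r ∧ r < t :=
    ⟨(sRad X + t) / 2, by linarith, by linarith⟩
  have hr0 : 0 < r := lt_of_le_of_lt (sRad_nonneg X) hr1
  obtain ⟨C, hC0, hC⟩ := geom_bound X hr1 hr0
  set st : ℕ → Matrix (Fin N) (Fin N) ℝ := fun n => (1 / t ^ (n+1)) • X ^ n with hst
  have hnorm_st : ∀ n, ‖st n‖ ≤ (C / t) * (r / t) ^ n := by
    intro n
    rw [hst]
    simp only [norm_smul, Real.norm_eq_abs, abs_of_nonneg
      (le_of_lt (div_pos one_pos (pow_pos ht0 _)))]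
    calc 1 / t ^ (n+1) * ‖X ^ n‖ ≤ 1 / t ^ (n+1) * (C * r ^ n) :=
          mul_le_mul_of_nonneg_left (hC n) (le_of_lt (div_pos one_pos (pow_pos ht0 _)))
      _ = (C / t) * (r / t) ^ n := by
          rw [div_pow]
          field_simp
          ring
  have hsummable : Summable st := by
    refine Summable.of_norm_bounded ?_ hnorm_st
    exact (summable_geometric_of_lt_one (le_of_lt (div_pos hr0 ht0))
      ((div_lt_one ht0).2 hr2)).mul_left _
  set S := ∑' n, st n with hS
  have htends : Tendsto (fun K => ∑ n ∈ Finset.range K, st n) atTop (𝓝 S) :=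
    hsummable.hasSum.tendsto_sum_nat
  -- entrywise limits
  have hentry : ∀ i j, Tendsto (fun K => ∑ n ∈ Finset.range K, (X ^ n) i j / t ^ (n+1))
      atTop (𝓝 (S i j)) := by
    intro i j
    have h1 : Tendsto (fun K => ‖(∑ n ∈ Finset.range K, st n) - S‖) atTop (𝓝 0) :=
      (tendsto_iff_norm_sub_tendsto_zero.1 htends)
    have h2 : ∀ K, |(∑ n ∈ Finset.range K, st n) i j - S i j| ≤
        ‖(∑ n ∈ Finset.range K, st n) - S‖ := by
      intro K
      have := entry_le_norm_real ((∑ n ∈ Finset.range K, st n) - S) i j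
      simpa [Matrix.sub_apply] using this
    have h3 : Tendsto (fun K => (∑ n ∈ Finset.range K, st n) i j) atTop (𝓝 (S i j)) := by
      rw [tendsto_iff_dist_tendsto_zero]
      refine squeeze_zero (fun K => dist_nonneg) (fun K => ?_) h1
      rw [Real.dist_eq]
      exact h2 K
    refine h3.congr fun K => ?_
    rw [Matrix.sum_apply]
    refine Finset.sum_congr rfl fun n _ => ?_
    rw [hst]
    simp [Matrix.smul_apply, div_eq_inv_mul, mul_comm]
  -- telescoping identities
  set f : ℕ → Matrix (Fin N) (Fin N) ℝ := fun n => (1 / t ^ n) • X ^ n with hf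
  have hf0 : f 0 = 1 := by rw [hf]; simp
  have hftend : Tendsto f atTop (𝓝 0) := by
    refine squeeze_zero_norm (a := fun n : ℕ => C * (r / t) ^ n) ?_ ?_
    · intro n
      rw [hf]
      simp only [norm_smul, Real.norm_eq_abs, abs_of_nonneg
        (le_of_lt (div_pos one_pos (pow_pos ht0 _)))]
      calc 1 / t ^ n * ‖X ^ n‖ ≤ 1 / t ^ n * (C * r ^ n) :=
            mul_le_mul_of_nonneg_left (hC n) (le_of_lt (div_pos one_pos (pow_pos ht0 _)))
        _ = C * (r / t) ^ n := by rw [div_pow]; field_simp; try ring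
    · have : Tendsto (fun n : ℕ => (r/t) ^ n) atTop (𝓝 0) :=
        tendsto_pow_atTop_nhds_zero_of_lt_one (le_of_lt (div_pos hr0 ht0))
          ((div_lt_one ht0).2 hr2)
      simpa using this.const_mul C
  have hleft_term : ∀ n, (t • 1 - X) * st n = f n - f (n+1) := by
    intro n
    rw [hst, hf]
    rw [Matrix.sub_mul, Matrix.smul_mul, Matrix.one_mul, Matrix.mul_smul, smul_smul]
    rw [← pow_succ']
    congr 1
    congr 1
    field_simp
    ring
  have hright_term : ∀ n, st n * (t • 1 - X) = f n - f (n+1) := by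
    intro n
    rw [hst, hf]
    rw [Matrix.mul_sub, Matrix.mul_smul, Matrix.mul_one, Matrix.smul_mul, smul_smul]
    rw [← pow_succ]
    congr 1
    congr 1
    field_simp
    ring
  have htele : Tendsto (fun K => ∑ n ∈ Finset.range K, (f n - f (n+1))) atTop (𝓝 1) := by
    have h1 : ∀ K, ∑ n ∈ Finset.range K, (f n - f (n+1)) = 1 - f K := by
      intro K
      rw [Finset.sum_range_sub' f K, hf0]
    have h2 : Tendsto (fun K : ℕ => 1 - f K) atTop (𝓝 (1 - 0)) :=
      tendsto_const_nhds.sub hftend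
    rw [sub_zero] at h2
    exact h2.congr fun K => (h1 K).symm
  have hleft : (t • 1 - X) * S = 1 := by
    have h1 : HasSum (fun n => (t • 1 - X) * st n) ((t • 1 - X) * S) :=
      hsummable.hasSum.mul_left _
    have h2 : Tendsto (fun K => ∑ n ∈ Finset.range K, (t • 1 - X) * st n) atTop
        (𝓝 ((t • 1 - X) * S)) := h1.tendsto_sum_nat
    have h3 : Tendsto (fun K => ∑ n ∈ Finset.range K, (t • 1 - X) * st n) atTop (𝓝 1) := by
      refine htele.congr fun K => Finset.sum_congr rfl fun n _ => (hleft_term n).symm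
    exact tendsto_nhds_unique h2 h3
  have hright : S * (t • 1 - X) = 1 := by
    have h1 : HasSum (fun n => st n * (t • 1 - X)) (S * (t • 1 - X)) :=
      hsummable.hasSum.mul_right _
    have h2 := h1.tendsto_sum_nat
    have h3 : Tendsto (fun K => ∑ n ∈ Finset.range K, st n * (t • 1 - X)) atTop (𝓝 1) := by
      refine htele.congr fun K => Finset.sum_congr rfl fun n _ => (hright_term n).symm
    exact tendsto_nhds_unique h2 h3
  exact ⟨S, hleft, hright, hentry⟩

/-- entrywise consequences of `resolvent_facts` -/
lemma resolvent_entry_facts (X : Matrix (Fin N) (Fin N) ℝ) (hX : ∀ i j, 0 ≤ X i j)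
    {t : ℝ} (ht : sRad X < t) :
    ∃ S : Matrix (Fin N) (Fin N) ℝ,
      (t • 1 - X) * S = 1 ∧ S * (t • 1 - X) = 1 ∧ (∀ i j, 0 ≤ S i j) ∧
      (∀ K i j, (∑ n ∈ Finset.range K, (X ^ n) i j / t ^ (n+1)) ≤ S i j) ∧
      (∀ n i j, (X ^ n) i j / t ^ (n+1) ≤ S i j) ∧
      (∀ i j, Tendsto (fun K => ∑ n ∈ Finset.range K, (X ^ n) i j / t ^ (n+1))
        atTop (𝓝 (S i j))) := by
  have ht0 : 0 < t := lt_of_le_of_lt (sRad_nonneg X) ht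
  obtain ⟨S, hl, hr, hent⟩ := resolvent_facts X hX ht
  have hterm_nonneg : ∀ n i j, 0 ≤ (X ^ n) i j / t ^ (n+1) :=
    fun n i j => div_nonneg (pow_entry_nonneg hX n i j) (le_of_lt (pow_pos ht0 _))
  have hmono : ∀ i j, Monotone (fun K => ∑ n ∈ Finset.range K, (X ^ n) i j / t ^ (n+1)) := by
    intro i j
    exact (Finset.sum_mono_set_of_nonneg (fun n => hterm_nonneg n i j)).comp
      fun a b hab => Finset.range_subset_range.2 hab
  have hS0 : ∀ i j, 0 ≤ S i j := by
    intro i j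
    exact ge_of_tendsto (hent i j) (Eventually.of_forall fun K =>
      Finset.sum_nonneg fun n _ => hterm_nonneg n i j)
  have hPS : ∀ K i j, (∑ n ∈ Finset.range K, (X ^ n) i j / t ^ (n+1)) ≤ S i j := by
    intro K i j
    exact (hmono i j).ge_of_tendsto (hent i j) K
  refine ⟨S, hl, hr, hS0, hPS, fun n i j => ?_, hent⟩
  calc (X ^ n) i j / t ^ (n+1)
      ≤ ∑ m ∈ Finset.range (n+1), (X ^ m) i j / t ^ (m+1) :=
        Finset.single_le_sum (f := fun m => (X ^ m) i j / t ^ (m+1))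
          (fun m _ => hterm_nonneg m i j) (Finset.mem_range.2 (Nat.lt_succ_self n))
    _ ≤ S i j := hPS (n+1) i j

end resolvent

/-- general: two-sided inverse from a telescoping summable series -/
lemma mul_tsum_eq_one {R : Type*} [NormedRing R] [CompleteSpace R] {a : R} {g f : ℕ → R}
    (hf0 : f 0 = 1) (hterm : ∀ n, a * g n = f n - f (n+1))
    (hterm' : ∀ n, g n * a = f n - f (n+1)) (hsum : Summable g)
    (hftend : Tendsto f atTop (𝓝 0)) :
    a * (∑' n, g n) = 1 ∧ (∑' n, g n) * a = 1 := by
  have htele : Tendsto (fun K => ∑ n ∈ Finset.range K, (f n - f (n+1))) atTop (𝓝 1) := by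
    have h1 : ∀ K, ∑ n ∈ Finset.range K, (f n - f (n+1)) = 1 - f K := by
      intro K
      rw [Finset.sum_range_sub' f K, hf0]
    have h2 : Tendsto (fun K : ℕ => 1 - f K) atTop (𝓝 (1 - 0)) :=
      tendsto_const_nhds.sub hftend
    rw [sub_zero] at h2
    exact h2.congr fun K => (h1 K).symm
  constructor
  · have h1 : HasSum (fun n => a * g n) (a * ∑' n, g n) := hsum.hasSum.mul_left _
    have h2 := h1.tendsto_sum_nat
    have h3 : Tendsto (fun K => ∑ n ∈ Finset.range K, a * g n) atTop (𝓝 1) :=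
      htele.congr fun K => Finset.sum_congr rfl fun n _ => (hterm n).symm
    exact tendsto_nhds_unique h2 h3
  · have h1 : HasSum (fun n => g n * a) ((∑' n, g n) * a) := hsum.hasSum.mul_right _
    have h2 := h1.tendsto_sum_nat
    have h3 : Tendsto (fun K => ∑ n ∈ Finset.range K, g n * a) atTop (𝓝 1) :=
      htele.congr fun K => Finset.sum_congr rfl fun n _ => (hterm' n).symm
    exact tendsto_nhds_unique h2 h3

section pflite
variable [NeZero N]

/-- **Perron–Frobenius lite**: the spectral radius of an entrywise nonnegative
real matrix belongs to its spectrum. -/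
theorem sRad_mem_spectrum (X : Matrix (Fin N) (Fin N) ℝ) (hX : ∀ i j, 0 ≤ X i j) :
    ((sRad X : ℝ) : ℂ) ∈ spectrum ℂ (Cm X) := by
  set ρ : ℝ := sRad X with hρdef
  rcases eq_or_lt_of_le (sRad_nonneg X) with hρ0 | hρpos
  · -- ρ = 0 : the spectrum is {0}
    obtain ⟨z, hz, habs⟩ := sRad_mem X
    have hz0 : z = 0 := by
      have h1 : ‖z‖ = 0 := by rw [habs, ← hρ0]
      exact norm_eq_zero.1 h1
    rw [hz0] at hz
    have hcast : ((ρ:ℝ):ℂ) = 0 := by rw [hρdef, ← hρ0]; simp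
    rw [hcast]
    simpa using hz
  by_contra hρnot
  -- the resolvent at ρ
  have hdet : (ρ • (1 : Matrix (Fin N) (Fin N) ℝ) - X).det ≠ 0 := by
    intro h
    exact hρnot ((mem_spec_iff_det_real X ρ).2 h)
  set W : Matrix (Fin N) (Fin N) ℝ := (ρ • 1 - X)⁻¹ with hWdef
  have hWr : (ρ • 1 - X) * W = 1 := Matrix.mul_nonsing_inv _ (isUnit_iff_ne_zero.2 hdet)
  have hWl : W * (ρ • 1 - X) = 1 := Matrix.nonsing_inv_mul _ (isUnit_iff_ne_zero.2 hdet)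
  set δ : ℝ := 1 / (2 * (‖W‖ + 1)) with hδdef
  have hWpos : 0 < ‖W‖ + 1 := by positivity
  have hδpos : 0 < δ := by rw [hδdef]; positivity
  -- uniform bound on the resolvent on (ρ, ρ + δ]
  have hbound : ∀ t : ℝ, ρ < t → t ≤ ρ + δ →
      ∀ S : Matrix (Fin N) (Fin N) ℝ, (t • 1 - X) * S = 1 → S * (t • 1 - X) = 1 →
      ‖S‖ ≤ 2 * (‖W‖ + 1) := by
    intro t ht1 ht2 S hSl hSr
    have e0 : (ρ • (1 : Matrix (Fin N) (Fin N) ℝ) - X) = (t • 1 - X) - (t - ρ) • 1 := by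
      rw [sub_smul]
      abel
    have e1 : (ρ • (1 : Matrix (Fin N) (Fin N) ℝ) - X) * S = 1 - (t - ρ) • S := by
      rw [e0, Matrix.sub_mul, hSl, Matrix.smul_mul, Matrix.one_mul]
    have e2 : S = W - (t - ρ) • (W * S) := by
      calc S = 1 * S := (Matrix.one_mul S).symm
        _ = (W * (ρ • 1 - X)) * S := by rw [hWl]
        _ = W * ((ρ • 1 - X) * S) := Matrix.mul_assoc _ _ _
        _ = W * (1 - (t - ρ) • S) := by rw [e1]
        _ = W - (t - ρ) • (W * S) := by
            rw [Matrix.mul_sub, Matrix.mul_one, Matrix.mul_smul]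
    have e3 : ‖S‖ ≤ ‖W‖ + (t - ρ) * (‖W‖ * ‖S‖) := by
      calc ‖S‖ = ‖W - (t - ρ) • (W * S)‖ := by rw [← e2]
        _ ≤ ‖W‖ + ‖(t - ρ) • (W * S)‖ := norm_sub_le _ _
        _ = ‖W‖ + |t - ρ| * ‖W * S‖ := by rw [norm_smul, Real.norm_eq_abs]
        _ ≤ ‖W‖ + (t - ρ) * (‖W‖ * ‖S‖) := by
            have h4 : ‖W * S‖ ≤ ‖W‖ * ‖S‖ := norm_mul_le _ _
            have h5 : |t - ρ| = t - ρ := abs_of_pos (by linarith)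
            rw [h5]
            have := mul_le_mul_of_nonneg_left h4 (by linarith : (0:ℝ) ≤ t - ρ)
            linarith
    have h6 : (t - ρ) * ‖W‖ ≤ 1 / 2 := by
      have h7 : t - ρ ≤ δ := by linarith
      have h8 : (t - ρ) * ‖W‖ ≤ δ * (‖W‖ + 1) := by
        have : (t - ρ) * ‖W‖ ≤ δ * ‖W‖ :=
          mul_le_mul_of_nonneg_right h7 (norm_nonneg _)
        have h9 : δ * ‖W‖ ≤ δ * (‖W‖ + 1) := by nlinarith
        linarith
      have h10 : δ * (‖W‖ + 1) = 1 / 2 := by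
        rw [hδdef]
        field_simp
      linarith
    nlinarith [norm_nonneg S, norm_nonneg W]
  -- bounded partial sums at ρ
  set Cb : ℝ := 3 * (2 * (‖W‖ + 1)) with hCbdef
  have hKbound : ∀ K : ℕ, 1 ≤ K → ρ / K ≤ δ →
      ∀ i j, (∑ n ∈ Finset.range K, (X ^ n) i j / ρ ^ (n+1)) ≤ Cb := by
    intro K hK1 hKδ i j
    set t : ℝ := ρ + ρ / K with htdef
    have hKpos : (0:ℝ) < K := by exact_mod_cast hK1
    have ht1 : ρ < t := by
      rw [htdef]
      have : 0 < ρ / K := div_pos hρpos hKpos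
      linarith
    have ht2 : t ≤ ρ + δ := by rw [htdef]; linarith
    obtain ⟨S, hSl, hSr, hS0, hPS, -, -⟩ := resolvent_entry_facts X hX ht1
    have hSnorm := hbound t ht1 ht2 S hSl hSr
    -- (t/ρ)^K ≤ 3
    have hfrac : (t / ρ) ^ K ≤ 3 := by
      have h1 : t / ρ = 1 + 1 / K := by
        rw [htdef, div_eq_iff hρpos.ne', add_mul, one_mul, div_mul_eq_mul_div, one_mul]
      have h2 : (1 : ℝ) + 1 / K ≤ Real.exp (1 / K) := by
        have := Real.add_one_le_exp (1 / (K:ℝ))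
        linarith
      have h3 : (t / ρ) ^ K ≤ Real.exp (1 / K) ^ K := by
        rw [h1]
        exact pow_le_pow_left₀ (by positivity) h2 K
      have h4 : Real.exp (1 / (K:ℝ)) ^ K = Real.exp ((K:ℝ) * (1 / K)) := by
        rw [Real.exp_nat_mul]
      have h5 : (K:ℝ) * (1 / K) = 1 := by field_simp
      have h6 : Real.exp (1:ℝ) < 3 := by
        have := Real.exp_one_lt_d9
        linarith
      calc (t / ρ) ^ K ≤ Real.exp (1 / K) ^ K := h3
        _ = Real.exp ((K:ℝ) * (1 / K)) := h4
        _ = Real.exp 1 := by rw [h5]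
        _ ≤ 3 := h6.le
    -- entrywise comparison
    have hcomp : (∑ n ∈ Finset.range K, (X ^ n) i j / ρ ^ (n+1)) ≤
        (t / ρ) ^ K * (∑ n ∈ Finset.range K, (X ^ n) i j / t ^ (n+1)) := by
      rw [Finset.mul_sum]
      refine Finset.sum_le_sum fun n hn => ?_
      have hn1 : n + 1 ≤ K := Finset.mem_range.1 hn
      have htpos : 0 < t := lt_trans hρpos ht1
      have hfr1 : (1:ℝ) ≤ t / ρ := le_of_lt ((one_lt_div hρpos).2 ht1)
      have key : (1:ℝ) / ρ ^ (n+1) ≤ (t / ρ) ^ K / t ^ (n+1) := by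
        rw [div_le_div_iff₀ (pow_pos hρpos _) (pow_pos htpos _)]
        have e1 : (t / ρ) ^ K * ρ ^ (n+1) = (t/ρ) ^ K * ρ ^ (n+1) := rfl
        have e2 : t ^ (n+1) = (t/ρ) ^ (n+1) * ρ ^ (n+1) := by
          rw [div_pow]
          exact (div_mul_cancel₀ _ (pow_ne_zero (n+1) (ne_of_gt hρpos) : ρ ^ (n+1) ≠ 0)).symm
        rw [e2]
        have e3 : (t/ρ) ^ (n+1) ≤ (t/ρ) ^ K := pow_le_pow_right₀ hfr1 hn1
        have := mul_le_mul_of_nonneg_right e3 (le_of_lt (pow_pos hρpos (n+1)))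
        linarith
      have hXn := pow_entry_nonneg hX n i j
      calc (X ^ n) i j / ρ ^ (n+1) = (X ^ n) i j * (1 / ρ ^ (n+1)) := by ring
        _ ≤ (X ^ n) i j * ((t / ρ) ^ K / t ^ (n+1)) :=
            mul_le_mul_of_nonneg_left key hXn
        _ = (t / ρ) ^ K * ((X ^ n) i j / t ^ (n+1)) := by ring
    have hentrybound : (∑ n ∈ Finset.range K, (X ^ n) i j / t ^ (n+1)) ≤ 2 * (‖W‖ + 1) := by
      calc (∑ n ∈ Finset.range K, (X ^ n) i j / t ^ (n+1)) ≤ S i j := hPS K i j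
        _ ≤ ‖S‖ := by
            have := entry_le_norm_real S i j
            rwa [Real.norm_eq_abs, abs_of_nonneg (hS0 i j)] at this
        _ ≤ 2 * (‖W‖ + 1) := hSnorm
    have hfrac0 : (0:ℝ) ≤ (t/ρ) ^ K := by positivity
    calc (∑ n ∈ Finset.range K, (X ^ n) i j / ρ ^ (n+1))
        ≤ (t / ρ) ^ K * (∑ n ∈ Finset.range K, (X ^ n) i j / t ^ (n+1)) := hcomp
      _ ≤ (t / ρ) ^ K * (2 * (‖W‖ + 1)) := by
          refine mul_le_mul_of_nonneg_left hentrybound hfrac0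
      _ ≤ 3 * (2 * (‖W‖ + 1)) := by
          refine mul_le_mul_of_nonneg_right hfrac ?_
          positivity
      _ = Cb := by rw [hCbdef]
  -- all partial sums are bounded
  have hall : ∀ K : ℕ, ∀ i j, (∑ n ∈ Finset.range K, (X ^ n) i j / ρ ^ (n+1)) ≤ Cb := by
    intro K i j
    obtain ⟨K₀, hK₀1, hK₀δ⟩ : ∃ K₀ : ℕ, 1 ≤ K₀ ∧ ρ / K₀ ≤ δ := by
      obtain ⟨m, hm⟩ := exists_nat_gt (ρ / δ)
      refine ⟨m + 1, by omega, ?_⟩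
      have hm1 : ρ / δ < (m + 1 : ℕ) := by
        push_cast
        push_cast at hm
        linarith
      have hmpos : (0:ℝ) < (m + 1 : ℕ) := by positivity
      rw [div_le_iff₀ hmpos]
      rw [div_lt_iff₀ hδpos] at hm1
      linarith
    set K' := max K K₀ with hK'
    have h1 : (∑ n ∈ Finset.range K, (X ^ n) i j / ρ ^ (n+1)) ≤
        (∑ n ∈ Finset.range K', (X ^ n) i j / ρ ^ (n+1)) := by
      refine Finset.sum_le_sum_of_subset_of_nonneg
        (Finset.range_subset_range.2 (le_max_left _ _)) fun n _ _ =>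
        div_nonneg (pow_entry_nonneg hX n i j) (le_of_lt (pow_pos hρpos _))
    have h2 : ρ / K' ≤ δ := by
      have hK'K₀ : (K₀ : ℝ) ≤ K' := by exact_mod_cast le_max_right K K₀
      have hK₀pos : (0:ℝ) < K₀ := by exact_mod_cast hK₀1
      have : ρ / (K' : ℝ) ≤ ρ / K₀ :=
        div_le_div_of_nonneg_left (le_of_lt hρpos) hK₀pos hK'K₀
      linarith
    exact h1.trans (hKbound K' (le_trans hK₀1 (le_max_right _ _)) h2 i j)
  -- summability of the normalized powers
  have hsum1 : ∀ i j, Summable (fun n => (X ^ n) i j / ρ ^ (n+1)) := by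
    intro i j
    refine summable_of_sum_range_le
      (fun n => div_nonneg (pow_entry_nonneg hX n i j) (le_of_lt (pow_pos hρpos _)))
      (fun K => hall K i j)
  have hsum2 : Summable (fun n => ‖Cm X ^ n‖ / ρ ^ (n+1)) := by
    refine Summable.of_nonneg_of_le
      (fun n => div_nonneg (norm_nonneg _) (le_of_lt (pow_pos hρpos _)))
      (fun n => ?_)
      ((summable_sum (s := (Finset.univ : Finset (Fin N))) fun i _ =>
        summable_sum (s := (Finset.univ : Finset (Fin N))) fun j _ => hsum1 i j))
    have h1 : ‖Cm X ^ n‖ ≤ ∑ i, ∑ j, (X ^ n) i j := by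
      rw [← Cm_pow]
      refine (norm_le_sum (Cm (X ^ n))).trans ?_
      refine le_of_eq (Finset.sum_congr rfl fun i _ => Finset.sum_congr rfl fun j _ => ?_)
      simp [Cm, Complex.norm_real, Real.norm_eq_abs, abs_of_nonneg (pow_entry_nonneg hX n i j)]
    calc ‖Cm X ^ n‖ / ρ ^ (n+1) ≤ (∑ i, ∑ j, (X ^ n) i j) / ρ ^ (n+1) :=
          (div_le_div_iff_of_pos_right (pow_pos hρpos _)).2 h1
      _ = ∑ i, ∑ j, (X ^ n) i j / ρ ^ (n+1) := by
          rw [Finset.sum_div]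
          exact Finset.sum_congr rfl fun i _ => by rw [Finset.sum_div]
  -- contradiction at a peripheral spectral point
  obtain ⟨z, hz, habs⟩ := sRad_mem X
  have hzabs : ‖z‖ = ρ := by rw [habs, hρdef]
  have hρρ : 0 < ρ := by rw [hρdef]; exact hρpos
  have hρne : ρ ≠ 0 := ne_of_gt hρρ
  have hz0 : z ≠ 0 := by
    intro h
    rw [h] at hzabs
    simp at hzabs
    exact hρne hzabs.symm
  set gs : ℕ → Matrix (Fin N) (Fin N) ℂ := fun n => (1 / z ^ (n+1)) • Cm X ^ n with hgs
  set fC : ℕ → Matrix (Fin N) (Fin N) ℂ := fun n => (1 / z ^ n) • Cm X ^ n with hfC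
  have hgnorm : ∀ n, ‖gs n‖ = ‖Cm X ^ n‖ / ρ ^ (n+1) := by
    intro n
    rw [hgs]
    simp only [norm_smul]
    rw [norm_div, norm_one, norm_pow, hzabs]
    ring
  have hsumg : Summable gs :=
    Summable.of_norm_bounded hsum2 fun n => le_of_eq (hgnorm n)
  have hfC0 : fC 0 = 1 := by rw [hfC]; simp
  have hfCnorm : ∀ n, ‖fC n‖ = ρ * (‖Cm X ^ n‖ / ρ ^ (n+1)) := by
    intro n
    rw [hfC]
    simp only [norm_smul]
    rw [norm_div, norm_one, norm_pow, hzabs, pow_succ]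
    field_simp
  have hfCtend : Tendsto fC atTop (𝓝 0) := by
    refine squeeze_zero_norm (a := fun n : ℕ => ρ * (‖Cm X ^ n‖ / ρ ^ (n+1)))
      (fun n => le_of_eq (hfCnorm n)) ?_
    have h1 := hsum2.tendsto_atTop_zero
    have h2 := h1.const_mul ρ
    simpa using h2
  have hterm : ∀ n, ((z • 1 - Cm X)) * gs n = fC n - fC (n+1) := by
    intro n
    rw [hgs, hfC]
    rw [Matrix.sub_mul, Matrix.smul_mul, Matrix.one_mul, Matrix.mul_smul, smul_smul,
      ← pow_succ']
    congr 1
    congr 1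
    field_simp
    ring
  have hterm' : ∀ n, gs n * ((z • 1 - Cm X)) = fC n - fC (n+1) := by
    intro n
    rw [hgs, hfC]
    rw [Matrix.mul_sub, Matrix.mul_smul, Matrix.mul_one, Matrix.smul_mul, smul_smul,
      ← pow_succ]
    congr 1
    congr 1
    field_simp
    ring
  obtain ⟨hl, hr⟩ := mul_tsum_eq_one hfC0 hterm hterm' hsumg hfCtend
  have hunit : IsUnit (z • (1 : Matrix (Fin N) (Fin N) ℂ) - Cm X) :=
    ⟨⟨z • 1 - Cm X, ∑' n, gs n, hl, hr⟩, rfl⟩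
  have hnotunit := spectrum.mem_iff.1 hz
  rw [Algebra.algebraMap_eq_smul_one] at hnotunit
  exact hnotunit hunit

end pflite

section shift
variable [NeZero N]

/-- spectral translation -/
lemma mem_spec_shift (A : Matrix (Fin N) (Fin N) ℝ) (c : ℝ) (z : ℂ) :
    z ∈ spectrum ℂ (Cm A) ↔ (z + c) ∈ spectrum ℂ (Cm (A + c • 1)) := by
  rw [mem_spec_iff_det, mem_spec_iff_det]
  have heq : (z + c) • (1 : Matrix (Fin N) (Fin N) ℂ) - Cm (A + c • 1) =
      z • 1 - Cm A := by
    rw [Cm_add, Cm_smul, Cm_one, add_smul]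
    abel
  rw [heq]

/-- leading eigenvalue via a nonnegative shift -/
lemma sRe_eq_sRad_shift (A : Matrix (Fin N) (Fin N) ℝ) (c : ℝ)
    (hP : ∀ i j, 0 ≤ (A + c • 1) i j) :
    sRe A = sRad (A + c • 1) - c ∧ ((sRe A : ℝ) : ℂ) ∈ spectrum ℂ (Cm A) := by
  set P := A + c • 1 with hPdef
  have hρP : ((sRad P : ℝ) : ℂ) ∈ spectrum ℂ (Cm P) := sRad_mem_spectrum P hP
  have hmem : ((sRad P - c : ℝ) : ℂ) ∈ spectrum ℂ (Cm A) := by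
    rw [mem_spec_shift A c]
    have : ((sRad P - c : ℝ) : ℂ) + (c : ℂ) = ((sRad P : ℝ) : ℂ) := by push_cast; ring
    rw [this, ← hPdef]
    exact hρP
  have hub : ∀ z ∈ spectrum ℂ (Cm A), z.re ≤ sRad P - c := by
    intro z hz
    have h1 : (z + c) ∈ spectrum ℂ (Cm P) := by
      rw [hPdef]
      exact (mem_spec_shift A c z).1 hz
    have h2 : ‖z + c‖ ≤ sRad P := le_sRad P h1
    have h3 : (z + (c:ℂ)).re ≤ ‖z + c‖ := Complex.re_le_norm _
    have h4 : (z + (c:ℂ)).re = z.re + c := by simp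
    linarith
  have heq : sRe A = sRad P - c := by
    apply le_antisymm
    · obtain ⟨z, hz, hre⟩ := sRe_mem A
      rw [← hre]
      exact hub z hz
    · have := le_sRe A hmem
      simpa using this
  exact ⟨heq, heq ▸ (by simpa using hmem)⟩

/-- spectrum of `X*Y` equals that of `Y*X` (square case) -/
lemma spec_mul_comm (X Y : Matrix (Fin N) (Fin N) ℝ) :
    spectrum ℂ (Cm (X * Y)) = spectrum ℂ (Cm (Y * X)) := by
  ext z
  rw [mem_spec_iff_det, mem_spec_iff_det]
  have hdet : ∀ z : ℂ, (z • (1 : Matrix (Fin N) (Fin N) ℂ) - Cm (X * Y)).det =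
      (z • (1 : Matrix (Fin N) (Fin N) ℂ) - Cm (Y * X)).det := by
    intro z
    rcases eq_or_ne z 0 with hz | hz
    · subst hz
      rw [zero_smul, zero_sub, zero_sub, Cm_mul, Cm_mul]
      rw [Matrix.det_neg, Matrix.det_neg, Matrix.det_mul, Matrix.det_mul]
      ring
    · have e1 : z • (1 : Matrix (Fin N) (Fin N) ℂ) - Cm (X * Y) =
          z • (1 - (z⁻¹ • Cm X) * Cm Y) := by
        rw [Cm_mul, Matrix.smul_mul, smul_sub, smul_smul, mul_inv_cancel₀ hz, one_smul]
      have e2 : z • (1 : Matrix (Fin N) (Fin N) ℂ) - Cm (Y * X) =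
          z • (1 - Cm Y * (z⁻¹ • Cm X)) := by
        rw [Cm_mul, Matrix.mul_smul, smul_sub, smul_smul, mul_inv_cancel₀ hz, one_smul]
      rw [e1, e2, Matrix.det_smul, Matrix.det_smul, Matrix.det_one_sub_mul_comm]
  rw [hdet z]

/-- the key determinant splitting: for `A = T + U` and `R` a two-sided inverse of
`t•1 - U`, real `t` is an eigenvalue of `A` iff `1` is an eigenvalue of `T*R`. -/
lemma det_split (A T U R : Matrix (Fin N) (Fin N) ℝ) (t : ℝ) (hA : A = T + U)
    (hl : (t • 1 - U) * R = 1) (hr : R * (t • 1 - U) = 1) :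
    (((t : ℝ) : ℂ) ∈ spectrum ℂ (Cm A) ↔ ((1 : ℝ) : ℂ) ∈ spectrum ℂ (Cm (T * R))) := by
  have hkey : t • (1 : Matrix (Fin N) (Fin N) ℝ) - A = (1 - T * R) * (t • 1 - U) := by
    rw [Matrix.sub_mul, Matrix.one_mul, Matrix.mul_assoc, hr, Matrix.mul_one, hA]
    abel
  have hdetU : (t • (1 : Matrix (Fin N) (Fin N) ℝ) - U).det ≠ 0 := by
    intro h
    have := congrArg Matrix.det hl
    rw [Matrix.det_mul, h, Matrix.det_one, zero_mul] at this
    exact zero_ne_one this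
  rw [mem_spec_iff_det_real, mem_spec_iff_det_real]
  rw [hkey, Matrix.det_mul]
  constructor
  · intro h
    rcases mul_eq_zero.1 h with h1 | h1
    · rw [one_smul]
      exact h1
    · exact absurd h1 hdetU
  · intro h
    rw [one_smul] at h
    rw [h, zero_mul]

end shift


section metzler
variable [NeZero N]

/-- the canonical nonnegative shift of a Metzler matrix -/
lemma metzler_shift_nonneg {U : Matrix (Fin N) (Fin N) ℝ} (hU : ∀ i j, i ≠ j → 0 ≤ U i j) :
    ∀ i j, 0 ≤ (U + (1 + ∑ k, |U k k|) • 1) i j := by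
  intro i j
  rcases eq_or_ne i j with h | h
  · subst h
    simp only [Matrix.add_apply, Matrix.smul_apply, Matrix.one_apply_eq, smul_eq_mul, mul_one]
    have h1 : |U i i| ≤ ∑ k, |U k k| :=
      Finset.single_le_sum (f := fun k => |U k k|) (fun k _ => abs_nonneg _)
        (Finset.mem_univ i)
    have h2 : -U i i ≤ |U i i| := neg_le_abs _
    linarith
  · simp only [Matrix.add_apply, Matrix.smul_apply, Matrix.one_apply_ne h, smul_eq_mul,
      mul_zero, add_zero]
    exact hU i j h

/-- resolvent package for a Metzler matrix with negative leading eigenvalue -/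
lemma metzler_resolvent {U : Matrix (Fin N) (Fin N) ℝ} (hU : ∀ i j, i ≠ j → 0 ≤ U i j)
    (hs : sRe U < 0) {t : ℝ} (ht : 0 ≤ t) :
    ∃ R : Matrix (Fin N) (Fin N) ℝ,
      (t • 1 - U) * R = 1 ∧ R * (t • 1 - U) = 1 ∧ (∀ i j, 0 ≤ R i j) ∧
      (∀ i j, Tendsto (fun K => ∑ n ∈ Finset.range K,
        ((U + (1 + ∑ k, |U k k|) • 1) ^ n) i j / (t + (1 + ∑ k, |U k k|)) ^ (n+1))
        atTop (𝓝 (R i j))) := by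
  set d : ℝ := 1 + ∑ k, |U k k| with hd
  have hd1 : (1:ℝ) ≤ d := by
    rw [hd]
    have : 0 ≤ ∑ k, |U k k| := Finset.sum_nonneg fun k _ => abs_nonneg _
    linarith
  set Q := U + d • 1 with hQ
  have hQ0 : ∀ i j, 0 ≤ Q i j := by
    rw [hQ, hd]
    exact metzler_shift_nonneg hU
  have hrad : sRad Q < t + d := by
    have h1 := (sRe_eq_sRad_shift U d hQ0).1
    have h2 : sRad Q = sRe U + d := by rw [hQ] at *; linarith
    linarith
  obtain ⟨S, hl, hr, hS0, hPS, hterm, hent⟩ := resolvent_entry_facts Q hQ0 hrad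
  have hrw : (t + d) • (1 : Matrix (Fin N) (Fin N) ℝ) - Q = t • 1 - U := by
    rw [hQ, add_smul]
    abel
  rw [hrw] at hl hr
  exact ⟨S, hl, hr, hS0, fun i j => by rw [hd] at hent ⊢; exact hent i j⟩

/-- entrywise monotonicity of powers of `1 + P` -/
lemma one_add_pow_mono {P : Matrix (Fin N) (Fin N) ℝ} (hP : ∀ i j, 0 ≤ P i j) :
    ∀ m m' : ℕ, m ≤ m' → ∀ i j, ((1 + P) ^ m) i j ≤ ((1 + P) ^ m') i j := by
  have h1P : ∀ i j, 0 ≤ (1 + P) i j := by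
    intro i j
    rcases eq_or_ne i j with h | h
    · subst h; simp only [Matrix.add_apply, Matrix.one_apply_eq]; linarith [hP i i]
    · simp only [Matrix.add_apply, Matrix.one_apply_ne h]; linarith [hP i j]
  intro m m' hmm'
  induction m', hmm' using Nat.le_induction with
  | base => intro i j; exact le_refl _
  | succ k hk ih =>
      intro i j
      refine (ih i j).trans ?_
      have he : (1 + P) ^ (k+1) = (1 + P) ^ k + (1 + P) ^ k * P := by
        rw [pow_succ, Matrix.mul_add, Matrix.mul_one]
      rw [he, Matrix.add_apply]
      have := mul_entry_nonneg (pow_entry_nonneg h1P k) hP i j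
      linarith

/-- powers of `1 + P` dominate powers of `P` -/
lemma one_add_pow_ge {P : Matrix (Fin N) (Fin N) ℝ} (hP : ∀ i j, 0 ≤ P i j) :
    ∀ m : ℕ, ∀ i j, (P ^ m) i j ≤ ((1 + P) ^ m) i j := by
  have h1P : ∀ i j, 0 ≤ (1 + P) i j := by
    intro i j
    rcases eq_or_ne i j with h | h
    · subst h; simp only [Matrix.add_apply, Matrix.one_apply_eq]; linarith [hP i i]
    · simp only [Matrix.add_apply, Matrix.one_apply_ne h]; linarith [hP i j]
  intro m
  induction m with
  | zero => intro i j; simp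
  | succ k ih =>
      intro i j
      have h1 : (P ^ (k+1)) i j = (P ^ k * P) i j := by rw [pow_succ]
      have h2 : (P ^ k * P) i j ≤ ((1 + P) ^ k * P) i j :=
        mul_entry_mono (pow_entry_nonneg hP k) hP ih (fun _ _ => le_refl _) i j
      have he : (1 + P) ^ (k+1) = (1 + P) ^ k + (1 + P) ^ k * P := by
        rw [pow_succ, Matrix.mul_add, Matrix.mul_one]
      rw [h1, he, Matrix.add_apply]
      have := pow_entry_nonneg h1P k i j
      linarith

/-- a strictly positive "connectivity" matrix from irreducibility -/
lemma exists_positive_G {P : Matrix (Fin N) (Fin N) ℝ} (hP : ∀ i j, 0 ≤ P i j)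
    (hirr : ∀ i j, ∃ n : ℕ, 0 < n ∧ 0 < (P ^ n) i j) :
    ∃ m : ℕ, ∀ i j, 0 < ((1 + P) ^ m) i j := by
  have hchoice : ∀ p : Fin N × Fin N, ∃ n : ℕ, 0 < n ∧ 0 < (P ^ n) p.1 p.2 :=
    fun p => hirr p.1 p.2
  choose nf hnf1 hnf2 using hchoice
  refine ⟨Finset.univ.sup nf, fun i j => ?_⟩
  have h1 : nf (i, j) ≤ Finset.univ.sup nf := Finset.le_sup (Finset.mem_univ _)
  calc (0:ℝ) < (P ^ nf (i, j)) i j := hnf2 (i, j)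
    _ ≤ ((1 + P) ^ nf (i, j)) i j := one_add_pow_ge hP _ i j
    _ ≤ ((1 + P) ^ Finset.univ.sup nf) i j := one_add_pow_mono hP _ _ h1 i j

/-- multiplying a nonzero nonnegative vector by a strictly positive matrix
gives a strictly positive vector -/
lemma pos_mulVec {G : Matrix (Fin N) (Fin N) ℝ} (hG : ∀ i j, 0 < G i j)
    {y : Fin N → ℝ} (hy : ∀ i, 0 ≤ y i) (hy0 : y ≠ 0) : ∀ i, 0 < (G.mulVec y) i := by
  obtain ⟨j₀, hj₀⟩ : ∃ j, 0 < y j := by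
    by_contra hc
    push_neg at hc
    exact hy0 (funext fun i => le_antisymm (hc i) (hy i))
  intro i
  have h1 : 0 < G i j₀ * y j₀ := mul_pos (hG i j₀) hj₀
  have h2 : G i j₀ * y j₀ ≤ ∑ k, G i k * y k :=
    Finset.single_le_sum (f := fun k => G i k * y k)
      (fun k _ => mul_nonneg (le_of_lt (hG i k)) (hy k)) (Finset.mem_univ j₀)
  have h3 : (G.mulVec y) i = ∑ k, G i k * y k := by simp [Matrix.mulVec, dotProduct]
  rw [h3]
  linarith

/-- forcing equality in the eigenvalue inequality, via irreducibility -/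
lemma irr_eigen_eq {P G : Matrix (Fin N) (Fin N) ℝ} (hP : ∀ i j, 0 ≤ P i j)
    (hG : ∀ i j, 0 < G i j) (hPG : P * G = G * P)
    {y : Fin N → ℝ} (hy : ∀ i, 0 ≤ y i) (hy0 : y ≠ 0)
    (h : ∀ i, sRad P * y i ≤ (P.mulVec y) i) :
    ∀ i, (P.mulVec y) i = sRad P * y i := by
  set rv : Fin N → ℝ := fun i => (P.mulVec y) i - sRad P * y i with hrv
  have hrv0 : ∀ i, 0 ≤ rv i := fun i => by rw [hrv]; simp; linarith [h i]
  by_contra hne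
  push_neg at hne
  obtain ⟨i₁, hi₁⟩ := hne
  have hrvne : rv ≠ 0 := by
    intro hz
    apply hi₁
    have := congrFun hz i₁
    rw [hrv] at this
    simp at this
    linarith [this]
  set w : Fin N → ℝ := G.mulVec y with hw
  have hwpos : ∀ i, 0 < w i := pos_mulVec hG hy hy0
  have hGrv : ∀ i, 0 < (G.mulVec rv) i := pos_mulVec hG hrv0 hrvne
  -- P w - ρ w = G rv
  have hkey : ∀ i, (P.mulVec w) i = sRad P * w i + (G.mulVec rv) i := by
    intro i
    have h1 : P.mulVec w = G.mulVec (P.mulVec y) := by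
      rw [hw, Matrix.mulVec_mulVec, Matrix.mulVec_mulVec, hPG]
    have h2 : ∀ x, G i x * rv x = G i x * ((P.mulVec y) x) - sRad P * (G i x * y x) := by
      intro x
      rw [hrv]
      ring
    have h3 : (G.mulVec rv) i = (G.mulVec (P.mulVec y)) i - sRad P * (G.mulVec y) i := by
      calc (G.mulVec rv) i = ∑ x, G i x * rv x := by simp [Matrix.mulVec, dotProduct]
        _ = ∑ x, (G i x * ((P.mulVec y) x) - sRad P * (G i x * y x)) :=
            Finset.sum_congr rfl fun x _ => h2 x
        _ = (∑ x, G i x * ((P.mulVec y) x)) - sRad P * ∑ x, G i x * y x := by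
            rw [Finset.sum_sub_distrib, Finset.mul_sum]
        _ = (G.mulVec (P.mulVec y)) i - sRad P * (G.mulVec y) i := by
            simp [Matrix.mulVec, dotProduct]
    rw [h1, hw]
    linarith [h3]
  -- a strict improvement
  obtain ⟨imax, -, hmaxmem⟩ := Finset.exists_max_image Finset.univ w
    ⟨⟨0, Nat.pos_of_ne_zero (NeZero.ne N)⟩, Finset.mem_univ _⟩
  obtain ⟨imin, -, hminmem⟩ := Finset.exists_min_image Finset.univ (fun i => (G.mulVec rv) i)
    ⟨⟨0, Nat.pos_of_ne_zero (NeZero.ne N)⟩, Finset.mem_univ _⟩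
  set δ : ℝ := (G.mulVec rv) imin / w imax with hδ
  have hδpos : 0 < δ := div_pos (hGrv imin) (hwpos imax)
  have himp : ∀ i, (sRad P + δ) * w i ≤ (P.mulVec w) i := by
    intro i
    have h1 : δ * w i ≤ δ * w imax :=
      mul_le_mul_of_nonneg_left (hmaxmem i (Finset.mem_univ i)) (le_of_lt hδpos)
    have h2 : δ * w imax = (G.mulVec rv) imin := by
      rw [hδ]
      exact div_mul_cancel₀ _ (ne_of_gt (hwpos imax))
    have h3 : (G.mulVec rv) imin ≤ (G.mulVec rv) i := hminmem i (Finset.mem_univ i)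
    have h4 := hkey i
    nlinarith
  have hcw := cw_lower hP (fun i => le_of_lt (hwpos i))
    (fun hz => (lt_irrefl (0:ℝ)) (by rw [hz] at hwpos; simpa using hwpos ⟨0, Nat.pos_of_ne_zero (NeZero.ne N)⟩)) himp
  linarith

end metzler

end RST

open Matrix Filter Topology RST

attribute [local instance] Matrix.linftyOpNormedAddCommGroup Matrix.linftyOpNormedRing
  Matrix.linftyOpNormedAlgebra

/-- The largest real part among the (complex) eigenvalues of a real square matrix. -/
noncomputable def specRealBound {N : ℕ} (M : Matrix (Fin N) (Fin N) ℝ) : ℝ :=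
  sSup (Complex.re '' spectrum ℂ (M.map (Complex.ofReal : ℝ → ℂ)))

/-- The spectral radius of a real square matrix. -/
noncomputable def specRadius {N : ℕ} (M : Matrix (Fin N) (Fin N) ℝ) : ℝ :=
  sSup ((fun z : ℂ => ‖z‖) '' spectrum ℂ (M.map (Complex.ofReal : ℝ → ℂ)))

/-- A Metzler matrix: nonnegative off-diagonal entries. -/
def IsMetzler {N : ℕ} (M : Matrix (Fin N) (Fin N) ℝ) : Prop :=
  ∀ i j, i ≠ j → 0 ≤ M i j

/-- Hurwitz: all complex eigenvalues have negative real part. -/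
def IsHurwitz {N : ℕ} (M : Matrix (Fin N) (Fin N) ℝ) : Prop :=
  ∀ μ ∈ spectrum ℂ (M.map (Complex.ofReal : ℝ → ℂ)), μ.re < 0

/-- Irreducibility: every pair of indices is connected by a positive-weight path
(stated via powers of the matrix shifted to be nonnegative). -/
def MetzlerIrreducible {N : ℕ} (M : Matrix (Fin N) (Fin N) ℝ) : Prop :=
  ∃ c : ℝ, (∀ i j, 0 ≤ (M + c • (1 : Matrix (Fin N) (Fin N) ℝ)) i j) ∧
    ∀ i j, ∃ n : ℕ, 0 < n ∧ 0 < ((M + c • (1 : Matrix (Fin N) (Fin N) ℝ)) ^ n) i j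

/-- for an irreducible Metzler matrix `A` with regular splitting
`A = T + U` (`T ⪰ 0`, `U` Metzler and Hurwitz), the leading eigenvalue of `A`
is positive (resp. zero) iff `ρ(−T U⁻¹) > 1` (resp. `= 1`). -/
theorem regular_splitting_threshold
    (N : ℕ) (hN : 0 < N)
    (A T U : Matrix (Fin N) (Fin N) ℝ)
    (hmetz : IsMetzler A) (hirr : MetzlerIrreducible A)
    (hsplit : A = T + U)
    (hT : ∀ i j, 0 ≤ T i j)
    (hUmetz : IsMetzler U) (hUhurwitz : IsHurwitz U) :
    (0 < specRealBound A ↔ 1 < specRadius (-(T * U⁻¹))) ∧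
    (specRealBound A = 0 ↔ specRadius (-(T * U⁻¹)) = 1) := by
  haveI : NeZero N := ⟨hN.ne'⟩
  obtain ⟨c, hP0, hpath⟩ := hirr
  obtain ⟨hseq, hsmem⟩ := RST.sRe_eq_sRad_shift A c hP0
  set s := RST.sRe A with hsdef
  -- the leading eigenvalue of U is negative
  have hsU : RST.sRe U < 0 := by
    obtain ⟨z, hz, hre⟩ := RST.sRe_mem U
    rw [← hre]
    exact hUhurwitz z hz
  -- resolvent of U at any t ≥ 0
  set d : ℝ := 1 + ∑ k, |U k k| with hd
  set Q : Matrix (Fin N) (Fin N) ℝ := U + d • 1 with hQ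
  have hres : ∀ t : ℝ, 0 ≤ t → ∃ R : Matrix (Fin N) (Fin N) ℝ,
      (t • 1 - U) * R = 1 ∧ R * (t • 1 - U) = 1 ∧ (∀ i j, 0 ≤ R i j) ∧
      (∀ i j, Tendsto (fun K => ∑ n ∈ Finset.range K, (Q ^ n) i j / (t + d) ^ (n+1))
        atTop (𝓝 (R i j))) := by
    intro t ht
    obtain ⟨R, h1, h2, h3, h4⟩ := RST.metzler_resolvent hUmetz hsU ht
    refine ⟨R, h1, h2, h3, ?_⟩
    simp only [← hd, ← hQ] at h4
    exact h4
  have hQ0 : ∀ i j, 0 ≤ Q i j := by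
    rw [hQ, hd]
    exact RST.metzler_shift_nonneg hUmetz
  have hd1 : (1:ℝ) ≤ d := by
    rw [hd]
    have : 0 ≤ ∑ k, |U k k| := Finset.sum_nonneg fun k _ => abs_nonneg _
    linarith
  -- monotonicity of the threshold function
  have hmonoR : ∀ (t t' : ℝ) (R R' : Matrix (Fin N) (Fin N) ℝ), 0 ≤ t → t ≤ t' →
      (∀ i j, 0 ≤ R i j) → (∀ i j, 0 ≤ R' i j) →
      (∀ i j, Tendsto (fun K => ∑ n ∈ Finset.range K, (Q ^ n) i j / (t + d) ^ (n+1))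
        atTop (𝓝 (R i j))) →
      (∀ i j, Tendsto (fun K => ∑ n ∈ Finset.range K, (Q ^ n) i j / (t' + d) ^ (n+1))
        atTop (𝓝 (R' i j))) →
      RST.sRad (T * R') ≤ RST.sRad (T * R) := by
    intro t t' R R' ht htt' hR0 hR'0 hRt hR't
    have hent : ∀ i j, R' i j ≤ R i j := by
      intro i j
      refine le_of_tendsto_of_tendsto' (hR't i j) (hRt i j) fun K => ?_
      refine Finset.sum_le_sum fun n _ => ?_
      refine div_le_div_of_nonneg_left (RST.pow_entry_nonneg hQ0 n i j) ?_ ?_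
      · positivity
      · exact pow_le_pow_left₀ (by linarith) (by linarith) _
    exact RST.sRad_mono (RST.mul_entry_nonneg hT hR'0)
      (RST.mul_entry_mono hT hR'0 (fun _ _ => le_refl _) hent)
  -- the matrix B = -T U⁻¹
  obtain ⟨V, hVl0, hVr0, hV0, hVent⟩ := hres 0 le_rfl
  rw [zero_smul, zero_sub] at hVl0 hVr0
  have hUinv : U⁻¹ = -V := by
    apply Matrix.inv_eq_right_inv
    have h1 : -(U * V) = 1 := by rw [← Matrix.neg_mul]; exact hVl0
    rw [Matrix.mul_neg, h1]
  have hBeq : -(T * U⁻¹) = T * V := by rw [hUinv, Matrix.mul_neg, neg_neg]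
  have hB0 : ∀ i j, 0 ≤ (T * V) i j := RST.mul_entry_nonneg hT hV0
  set ρ0 : ℝ := RST.sRad (T * V) with hρ0def
  have hBB'' : ρ0 = RST.sRad (V * T) := by
    rw [hρ0def]
    unfold RST.sRad
    rw [RST.spec_mul_comm]
  -- implication (a) : ρ0 < 1 → s < 0
  have himpA : ρ0 < 1 → s < 0 := by
    intro hρ1
    by_contra hcon
    push_neg at hcon
    obtain ⟨Rs, hRsl, hRsr, hRs0, hRsent⟩ := hres s hcon
    have h1 : ((1:ℝ):ℂ) ∈ spectrum ℂ (RST.Cm (T * Rs)) :=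
      (RST.det_split A T U Rs s hsplit hRsl hRsr).1 hsmem
    have h2 : (1:ℝ) ≤ RST.sRad (T * Rs) := by
      have := RST.le_sRad _ h1
      simpa using this
    have hVent0 : ∀ i j, Tendsto (fun K => ∑ n ∈ Finset.range K,
        (Q ^ n) i j / ((0:ℝ) + d) ^ (n+1)) atTop (𝓝 (V i j)) := hVent
    have h3 : RST.sRad (T * Rs) ≤ ρ0 := by
      rw [hρ0def]
      exact hmonoR 0 s V Rs le_rfl hcon hV0 hRs0 hVent0 hRsent
    linarith
  -- implication (X) : s < 0 → ρ0 < 1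
  have himpX : s < 0 → ρ0 < 1 := by
    intro hs0
    obtain ⟨RA, hRAl, hRAr, hRA0, -⟩ := RST.metzler_resolvent hmetz hs0 (le_refl 0)
    rw [zero_smul, zero_sub] at hRAl hRAr
    set C : Matrix (Fin N) (Fin N) ℝ := 1 + RA * T with hC
    have hRAT0 := RST.mul_entry_nonneg hRA0 hT
    have hC0 : ∀ i j, 0 ≤ C i j := by
      intro i j
      rw [hC, Matrix.add_apply]
      rcases eq_or_ne i j with h | h
      · subst h
        rw [Matrix.one_apply_eq]
        linarith [hRAT0 i i]
      · rw [Matrix.one_apply_ne h]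
        linarith [hRAT0 i j]
    have hkeyC : (1 - V * T) * C = 1 := by
      have e1 : (1 : Matrix (Fin N) (Fin N) ℝ) - V * T = V * (-A) := by
        have hA' : -A = -U + -T := by rw [hsplit]; abel
        rw [hA', Matrix.mul_add, hVr0, Matrix.mul_neg]
        abel
      have e2 : (-A) * C = -U := by
        rw [hC, Matrix.mul_add, Matrix.mul_one, ← Matrix.mul_assoc, hRAl, Matrix.one_mul]
        rw [hsplit]
        abel
      rw [e1, Matrix.mul_assoc, e2, hVr0]
    have hCiter : C = 1 + (V * T) * C := by
      have h1 := hkeyC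
      rw [Matrix.sub_mul, Matrix.one_mul, sub_eq_iff_eq_add] at h1
      exact h1
    have hVT0 := RST.mul_entry_nonneg hV0 hT
    have hgeomsum : ∀ K : ℕ, ∀ i j,
        (∑ n ∈ Finset.range K, (V * T) ^ n) i j ≤ C i j := by
      intro K
      induction K with
      | zero => intro i j; simpa using hC0 i j
      | succ K ih =>
          intro i j
          have hsum0 : ∀ i j, 0 ≤ (∑ n ∈ Finset.range K, (V * T) ^ n) i j := by
            intro i j
            rw [Matrix.sum_apply]
            exact Finset.sum_nonneg fun n _ => RST.pow_entry_nonneg hVT0 n i j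
          have e3 : (∑ n ∈ Finset.range (K+1), (V * T) ^ n) =
              1 + (V * T) * (∑ n ∈ Finset.range K, (V * T) ^ n) := by
            rw [geom_sum_succ]
            exact add_comm ((V * T) * ∑ n ∈ Finset.range K, (V * T) ^ n) 1
          rw [e3]
          conv_rhs => rw [hCiter]
          rw [Matrix.add_apply, Matrix.add_apply]
          have h4 := RST.mul_entry_mono hVT0 hsum0 (fun _ _ => le_refl _) ih i j
          linarith
    have hsummB : ∀ i j, Summable (fun n => ((V * T) ^ n) i j) := by
      intro i j
      refine summable_of_sum_range_le (c := C i j)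
        (fun n => RST.pow_entry_nonneg hVT0 n i j) (fun K => ?_)
      have := hgeomsum K i j
      rw [Matrix.sum_apply] at this
      exact this
    have htend0 : Tendsto (fun n => ‖RST.Cm ((V * T) ^ n)‖) atTop (𝓝 0) := by
      have hsum : Tendsto (fun n => ∑ i, ∑ j, ((V * T) ^ n) i j) atTop (𝓝 0) := by
        have h5 : ∀ (i j : Fin N), Tendsto (fun n => ((V * T) ^ n) i j) atTop (𝓝 0) :=
          fun i j => (hsummB i j).tendsto_atTop_zero
        have h6 := tendsto_finset_sum (Finset.univ : Finset (Fin N))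
          (fun i _ => tendsto_finset_sum (Finset.univ : Finset (Fin N))
            (fun j _ => h5 i j))
        simpa using h6
      refine squeeze_zero (fun n => norm_nonneg _) (fun n => ?_) hsum
      refine (RST.norm_le_sum _).trans ?_
      refine le_of_eq (Finset.sum_congr rfl fun i _ => Finset.sum_congr rfl fun j _ => ?_)
      simp [RST.Cm, Complex.norm_real, Real.norm_eq_abs,
        abs_of_nonneg (RST.pow_entry_nonneg hVT0 n i j)]
    have hlt : RST.sRad (V * T) < 1 := by
      by_contra hge
      push_neg at hge
      have h7 : ∀ n, (1:ℝ) ≤ ‖RST.Cm ((V * T) ^ n)‖ := by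
        intro n
        calc (1:ℝ) ≤ RST.sRad (V * T) ^ n := one_le_pow₀ hge
          _ ≤ ‖RST.Cm (V * T) ^ n‖ := RST.sRad_pow_le _ n
          _ = ‖RST.Cm ((V * T) ^ n)‖ := by rw [RST.Cm_pow]
      obtain ⟨n, hn⟩ := (htend0.eventually_lt_const (by norm_num : (0:ℝ) < 1)).exists
      linarith [h7 n]
    rw [hBB'']
    exact hlt
  -- implication (b') : 0 < s → 1 < ρ0
  have himpB : 0 < s → 1 < ρ0 := by
    intro hspos
    by_contra hcon
    push_neg at hcon
    rcases lt_or_eq_of_le hcon with hlt | heq1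
    · linarith [himpA hlt]
    · -- ρ0 = 1 : every point of [0, s] is an eigenvalue of A
      have hsubset : ∀ t : ℝ, t ∈ Set.Icc (0:ℝ) s → ((t:ℝ):ℂ) ∈ spectrum ℂ (RST.Cm A) := by
        rintro t ⟨ht0, hts⟩
        obtain ⟨Rt, hRtl, hRtr, hRt0, hRtent⟩ := hres t ht0
        obtain ⟨Rs, hRsl, hRsr, hRs0, hRsent⟩ := hres s (le_of_lt hspos)
        have h1 : RST.sRad (T * Rt) ≤ ρ0 := by
          rw [hρ0def]
          exact hmonoR 0 t V Rt le_rfl ht0 hV0 hRt0 hVent hRtent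
        have h2 : ((1:ℝ):ℂ) ∈ spectrum ℂ (RST.Cm (T * Rs)) :=
          (RST.det_split A T U Rs s hsplit hRsl hRsr).1 hsmem
        have h3 : (1:ℝ) ≤ RST.sRad (T * Rs) := by
          have := RST.le_sRad _ h2
          simpa using this
        have h4 : RST.sRad (T * Rs) ≤ RST.sRad (T * Rt) :=
          hmonoR t s Rt Rs ht0 hts hRt0 hRs0 hRtent hRsent
        have h5 : RST.sRad (T * Rt) = 1 := by
          rw [heq1] at h1
          linarith
        have h6 := RST.sRad_mem_spectrum (T * Rt) (RST.mul_entry_nonneg hT hRt0)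
        rw [h5] at h6
        exact (RST.det_split A T U Rt t hsplit hRtl hRtr).2 h6
      have hfin := Matrix.finite_spectrum (RST.Cm A)
      have hinf : (Set.Icc (0:ℝ) s).Infinite := Set.infinite_coe_iff.1 (Set.Icc.infinite hspos)
      have himg : ((fun t : ℝ => ((t:ℝ):ℂ)) '' Set.Icc (0:ℝ) s).Infinite :=
        hinf.image (Set.injOn_of_injective Complex.ofReal_injective)
      refine himg (hfin.subset ?_)
      rintro z ⟨t, ht, rfl⟩
      exact hsubset t ht
  -- implication (Y) : s = 0 → ρ0 ≤ 1
  have himpY : s = 0 → ρ0 ≤ 1 := by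
    intro hs0
    have h0mem : ((0:ℝ):ℂ) ∈ spectrum ℂ (RST.Cm A) := by
      rw [← hs0]
      exact hsmem
    obtain ⟨v, hv0, hveq⟩ := RST.exists_eigenvector h0mem
    rw [Complex.ofReal_zero, zero_smul] at hveq
    set y : Fin N → ℝ := fun i => ‖v i‖ with hy
    have hy0 : ∀ i, 0 ≤ y i := fun i => norm_nonneg _
    have hyne : y ≠ 0 := by
      intro hz
      apply hv0
      funext i
      have h1 := congrFun hz i
      rw [hy] at h1
      simpa using h1
    set P : Matrix (Fin N) (Fin N) ℝ := A + c • 1 with hPd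
    have hP0' : ∀ i j, 0 ≤ P i j := by rw [hPd]; exact hP0
    have hρP : RST.sRad P = c := by
      rw [hsdef] at hs0
      rw [hPd]
      linarith [hseq]
    have hc0 : 0 ≤ c := by
      rw [← hρP]
      exact RST.sRad_nonneg P
    have hcw : ∀ i, RST.sRad P * y i ≤ (P.mulVec y) i := by
      have hCmP : RST.Cm P = RST.Cm A + (c:ℂ) • 1 := by
        rw [hPd, RST.Cm_add, RST.Cm_smul, RST.Cm_one]
      have h1 : (RST.Cm P).mulVec v = (c:ℂ) • v := by
        rw [hCmP, Matrix.add_mulVec, hveq, zero_add, Matrix.smul_mulVec,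
          Matrix.one_mulVec]
      intro i
      have h2 : ((RST.Cm P).mulVec v) i = (c:ℂ) * v i := by
        rw [h1]
        simp
      have h3 : ‖((RST.Cm P).mulVec v) i‖ = c * y i := by
        rw [h2, norm_mul, hy]
        simp [abs_of_nonneg hc0]
      have h4 : ‖((RST.Cm P).mulVec v) i‖ ≤ (P.mulVec y) i := by
        have h5 : ((RST.Cm P).mulVec v) i = ∑ k, ((P i k : ℝ) : ℂ) * v k := by
          simp [Matrix.mulVec, dotProduct, RST.Cm, Matrix.map_apply]
        rw [h5]
        refine (norm_sum_le _ _).trans ?_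
        refine le_of_eq (Finset.sum_congr rfl fun k _ => ?_)
        rw [norm_mul, Complex.norm_real, Real.norm_eq_abs, abs_of_nonneg (hP0' i k), hy]
      rw [hρP]
      linarith [h3 ▸ h4]
    obtain ⟨m, hGpos⟩ := RST.exists_positive_G hP0' (by rw [hPd]; exact hpath)
    set G : Matrix (Fin N) (Fin N) ℝ := (1 + P) ^ m with hG
    have hPG : P * G = G * P := by
      rw [hG]
      exact (((Commute.one_right P).add_right (Commute.refl P)).pow_right m).eq
    have heig := RST.irr_eigen_eq hP0' hGpos hPG hy0 hyne hcw
    have hAy : A.mulVec y = 0 := by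
      funext i
      have h2 : (P.mulVec y) i = (A.mulVec y) i + c * y i := by
        rw [hPd, Matrix.add_mulVec, Matrix.smul_mulVec, Matrix.one_mulVec]
        simp
      have h3 := heig i
      rw [hρP] at h3
      simp only [Pi.zero_apply]
      linarith
    set w : Fin N → ℝ := G.mulVec y with hw
    have hwpos : ∀ i, 0 < w i := RST.pos_mulVec hGpos hy0 hyne
    have hAG : A * G = G * A := by
      have h3 : A = P - c • 1 := by rw [hPd, add_sub_cancel_right]
      rw [h3, Matrix.sub_mul, Matrix.mul_sub, hPG, Matrix.smul_mul, Matrix.one_mul,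
        Matrix.mul_smul, Matrix.mul_one]
    have hAw : A.mulVec w = 0 := by
      rw [hw, Matrix.mulVec_mulVec, hAG, ← Matrix.mulVec_mulVec, hAy, Matrix.mulVec_zero]
    have hfix : ∀ i, ((V * T).mulVec w) i ≤ w i := by
      have hTw : T.mulVec w = (-U).mulVec w := by
        have h4 : (T + U).mulVec w = 0 := by rw [← hsplit]; exact hAw
        rw [Matrix.add_mulVec] at h4
        rw [Matrix.neg_mulVec]
        exact eq_neg_of_add_eq_zero_left h4
      have h5 : (V * T).mulVec w = w := by
        rw [← Matrix.mulVec_mulVec, hTw, Matrix.mulVec_mulVec, hVr0, Matrix.one_mulVec]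
      intro i
      rw [h5]
    have h6 : RST.sRad (V * T) ≤ 1 :=
      RST.sRad_le_one_of_fixed (RST.mul_entry_nonneg hV0 hT) hwpos hfix
    rw [hBB'']
    exact h6
  -- the remaining forward implication at the threshold
  have hforward2 : s = 0 → ρ0 = 1 := by
    intro h
    refine le_antisymm (himpY h) ?_
    have h0mem : ((0:ℝ):ℂ) ∈ spectrum ℂ (RST.Cm A) := by rw [← h]; exact hsmem
    have hVl0' : ((0:ℝ) • 1 - U) * V = 1 := by rw [zero_smul, zero_sub]; exact hVl0
    have hVr0' : V * ((0:ℝ) • 1 - U) = 1 := by rw [zero_smul, zero_sub]; exact hVr0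
    have h1 : ((1:ℝ):ℂ) ∈ spectrum ℂ (RST.Cm (T * V)) :=
      (RST.det_split A T U V 0 hsplit hVl0' hVr0').1 h0mem
    have h2 := RST.le_sRad _ h1
    rw [hρ0def]
    simpa using h2
  -- assemble the two equivalences
  have hgoal1 : specRealBound A = s := rfl
  have hgoal2 : specRadius (-(T * U⁻¹)) = ρ0 := by
    show RST.sRad (-(T * U⁻¹)) = ρ0
    rw [hBeq, hρ0def]
  rw [hgoal1, hgoal2]
  constructor
  · constructor
    · exact himpB
    · intro h
      rcases lt_trichotomy s 0 with h1 | h1 | h1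
      · linarith [himpX h1]
      · linarith [himpY h1, hforward2 h1]
      · exact h1
  · constructor
    · exact hforward2
    · intro h
      rcases lt_trichotomy s 0 with h1 | h1 | h1
      · linarith [himpX h1]
      · exact h1
      · linarith [himpB h1]
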